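/- arXiv:1506.01362 — 3 statements merged into one kernel-verified Lean document; each statement's English description precedes it below -/
import Mathlib

section
/- Let $G_1$ be a connected graph on $[t]$ and let $G_2 = \bigsqcup_{i=1}^r H_i$ be a disjoint union of connected graphs $H_i$ on $[n_i]$, $r \geq 2$, all vertex sets disjoint. Then a nonempty subset $T$ of the vertices of $G_1 * G_2$ has the cut point property if and only if either $T = [t] \cup \bigcup_{i=1}^r T_i$ where each $T_i$ is (possibly empty and) has the cut point property for $H_i$, or $T = T_0 \cup \bigcup_{i=1}^r [n_i]$ where $T_0$ is nonempty and has the cut point property for $G_1$. -/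
open SimpleGraph Set

/-- Number of connected components of the induced subgraph of `G` on `s`. -/
noncomputable def nc {V : Type*} (G : SimpleGraph V) (s : Set V) : ℕ :=
  Nat.card (G.induce s).ConnectedComponent

/-- `T` has the cut point property for `G`: every `i ∈ T` is a cut point of the
induced subgraph on `Tᶜ ∪ {i}` (removing `i` increases the number of components). -/
def CutPointProperty {V : Type*} (G : SimpleGraph V) (T : Set V) : Prop :=
  ∀ i ∈ T, nc G (Tᶜ ∪ {i}) < nc G Tᶜ

/-- The join `G₁ * G₂` of two graphs on disjoint vertex sets. -/
def joinGraph {V₁ V₂ : Type*} (G₁ : SimpleGraph V₁) (G₂ : SimpleGraph V₂) :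
    SimpleGraph (V₁ ⊕ V₂) where
  Adj v w :=
    match v, w with
    | Sum.inl a, Sum.inl b => G₁.Adj a b
    | Sum.inr a, Sum.inr b => G₂.Adj a b
    | Sum.inl _, Sum.inr _ => True
    | Sum.inr _, Sum.inl _ => True
  symm := by constructor; rintro (a | a) (b | b) h <;> simp_all <;> exact h.symm
  loopless := by constructor; rintro (a | a) h <;> simp_all

/-- Disjoint union of an indexed family of graphs. -/
def sigmaGraph {ι : Type*} {V : ι → Type*} (G : ∀ i, SimpleGraph (V i)) :
    SimpleGraph (Σ i, V i) where
  Adj v w := ∃ h : v.1 = w.1, (G w.1).Adj (h ▸ v.2) w.2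
  symm := by
    constructor
    rintro ⟨i, a⟩ ⟨j, b⟩ ⟨h, hab⟩
    dsimp at h hab ⊢
    subst h
    exact ⟨rfl, hab.symm⟩
  loopless := by
    constructor
    rintro ⟨i, a⟩ ⟨h, hab⟩
    dsimp at h hab
    exact (G i).irrefl hab
/-- The corona `H ⊙ H'`: one copy of `H'` for each vertex `v` of `H`,
with every vertex of the copy joined to `v`. -/
def coronaGraph {V₁ V₂ : Type*} (H : SimpleGraph V₁) (H' : SimpleGraph V₂) :
    SimpleGraph (V₁ ⊕ V₁ × V₂) where
  Adj v w :=
    match v, w with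
    | Sum.inl a, Sum.inl b => H.Adj a b
    | Sum.inl a, Sum.inr p => a = p.1
    | Sum.inr p, Sum.inl b => p.1 = b
    | Sum.inr p, Sum.inr q => p.1 = q.1 ∧ H'.Adj p.2 q.2
  symm := by
    constructor
    rintro (a | p) (b | q) h <;> dsimp at h ⊢
    · exact h.symm
    · exact h.symm
    · exact h.symm
    · exact ⟨h.1.symm, h.2.symm⟩
  loopless := by constructor; rintro (a | p) h <;> simp_all

/-- The whisker graph `W(H)`: a pendant vertex attached to each vertex of `H`. -/
def whiskerGraph {V : Type*} (H : SimpleGraph V) : SimpleGraph (V ⊕ V) where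
  Adj v w :=
    match v, w with
    | Sum.inl a, Sum.inl b => H.Adj a b
    | Sum.inl a, Sum.inr b => a = b
    | Sum.inr a, Sum.inl b => a = b
    | Sum.inr _, Sum.inr _ => False
  symm := by constructor; rintro (a | a) (b | b) h <;> simp_all; exact h.symm
  loopless := by constructor; rintro (a | a) h <;> simp_all

/-- `F` is (the vertex set of) a maximal clique of `G`. -/
def MaxClique {V : Type*} (G : SimpleGraph V) (F : Set V) : Prop :=
  Maximal G.IsClique F

/-- A graph is chordal if every cycle of length at least 4 has a chord. -/
def IsChordal {V : Type*} (G : SimpleGraph V) : Prop :=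
  ∀ (n : ℕ), 4 ≤ n → ∀ c : ℕ → V, Set.InjOn c (Set.Iio n) →
    (∀ i < n, G.Adj (c i) (c ((i + 1) % n))) →
    ∃ i < n, ∃ j < n, j ≠ i ∧ j ≠ (i + 1) % n ∧ i ≠ (j + 1) % n ∧ G.Adj (c i) (c j)

/-- A generalized block graph: a connected chordal graph in which any three distinct
maximal cliques with nonempty common intersection have all pairwise intersections equal. -/
def GenBlockGraph {V : Type*} (G : SimpleGraph V) : Prop :=
  G.Connected ∧ IsChordal G ∧
    ∀ F₁ F₂ F₃ : Set V, MaxClique G F₁ → MaxClique G F₂ → MaxClique G F₃ →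
      F₁ ≠ F₂ → F₁ ≠ F₃ → F₂ ≠ F₃ → (F₁ ∩ F₂ ∩ F₃).Nonempty →
      F₁ ∩ F₂ = F₁ ∩ F₃ ∧ F₁ ∩ F₂ = F₂ ∩ F₃

/-- `A` is a cut set of `G`: deleting `A` increases the number of connected components. -/
def IsCutSet {V : Type*} (G : SimpleGraph V) (A : Set V) : Prop :=
  nc G Set.univ < nc G Aᶜ

/-- `A` is an inclusion-minimal cut set of `G`. -/
def IsMinCutSet {V : Type*} (G : SimpleGraph V) (A : Set V) : Prop :=
  IsCutSet G A ∧ ∀ B ⊂ A, ¬ IsCutSet G B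

/-- `A` is a `t`-minimal cut set of `G`: a minimal cut set which is the common
intersection of exactly `t` maximal cliques of `G` and disjoint from all other
maximal cliques. -/
def IsTMinCut {V : Type*} (G : SimpleGraph V) (t : ℕ) (A : Set V) : Prop :=
  IsMinCutSet G A ∧
  {F : Set V | MaxClique G F ∧ A ⊆ F}.ncard = t ∧
  ⋂₀ {F : Set V | MaxClique G F ∧ A ⊆ F} = A ∧
  ∀ F : Set V, MaxClique G F → ¬ A ⊆ F → F ∩ A = ∅

/-- `B` is a branch of the facet `F` in the clique complex of `G`. -/
def IsBranch {V : Type*} (G : SimpleGraph V) (F B : Set V) : Prop :=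
  MaxClique G B ∧ B ≠ F ∧ ∀ H : Set V, MaxClique G H → H ≠ F → H ∩ F ⊆ B ∩ F

/-- `F` is a leaf of the clique complex of `G`. -/
def IsLeafClique {V : Type*} (G : SimpleGraph V) (F : Set V) : Prop :=
  MaxClique G F ∧ ((∀ F' : Set V, MaxClique G F' → F' = F) ∨ ∃ B, IsBranch G F B)


section MyAux

lemma nc_empty {W : Type*} (G : SimpleGraph W) : nc G (∅ : Set W) = 0 := by
  unfold nc
  have : IsEmpty ((∅ : Set W) : Type _) := by simp [isEmpty_subtype]
  have : IsEmpty (G.induce (∅ : Set W)).ConnectedComponent := by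
    constructor; intro c; exact c.ind (fun v => this.elim v)
  simp [Nat.card_of_isEmpty]

lemma one_le_nc {W : Type*} [Finite W] (G : SimpleGraph W) {s : Set W} (hs : s.Nonempty) :
    1 ≤ nc G s := by
  obtain ⟨v, hv⟩ := hs
  have : Nonempty (G.induce s).ConnectedComponent := ⟨(G.induce s).connectedComponentMk ⟨v, hv⟩⟩
  exact Nat.card_pos

lemma nonempty_of_nc_pos {W : Type*} {G : SimpleGraph W} {s : Set W} (h : 0 < nc G s) :
    s.Nonempty := by
  rcases s.eq_empty_or_nonempty with rfl | h'
  · rw [nc_empty] at h; omega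
  · exact h'

lemma nc_eq_one_of_connected {W : Type*} {G : SimpleGraph W} {s : Set W}
    (h : (G.induce s).Connected) : nc G s = 1 := by
  unfold nc
  haveI := h.nonempty
  have : Nonempty (G.induce s).ConnectedComponent := ⟨(G.induce s).connectedComponentMk (Classical.arbitrary _)⟩
  have : Subsingleton (G.induce s).ConnectedComponent := by
    constructor
    intro a b
    refine a.ind (fun v => b.ind (fun w => ?_))
    exact ConnectedComponent.sound (h.preconnected v w)
  exact Nat.card_unique

lemma nc_congr {W W' : Type*} {G : SimpleGraph W} {G' : SimpleGraph W'} {s : Set W} {t : Set W'}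
    (e : G.induce s ≃g G'.induce t) : nc G s = nc G' t :=
  Nat.card_congr e.connectedComponentEquiv

lemma cpp_compl_two_le {W : Type*} [Finite W] {G : SimpleGraph W} {T : Set W}
    (h : CutPointProperty G T) (hT : T.Nonempty) : 2 ≤ nc G Tᶜ := by
  obtain ⟨v, hv⟩ := hT
  have h1 : 1 ≤ nc G (Tᶜ ∪ {v}) := one_le_nc _ ⟨v, Or.inr rfl⟩
  have := h v hv
  omega

lemma cpp_compl_nonempty {W : Type*} [Finite W] [Nonempty W] {G : SimpleGraph W} {T : Set W}
    (h : CutPointProperty G T) : Tᶜ.Nonempty := by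
  rcases T.eq_empty_or_nonempty with rfl | hT
  · simp
  · exact nonempty_of_nc_pos (lt_of_lt_of_le (by norm_num) (cpp_compl_two_le h hT))

lemma nat_card_sigma {ι : Type*} [Fintype ι] (α : ι → Type*) [∀ i, Finite (α i)] :
    Nat.card (Σ i, α i) = ∑ i, Nat.card (α i) := by
  letI : ∀ i, Fintype (α i) := fun i => Fintype.ofFinite _
  simp [Nat.card_eq_fintype_card, Fintype.card_sigma]

-- join induce iso on inr image
noncomputable def inrInduceIso {V₁ V₂ : Type*} (G₁ : SimpleGraph V₁) (G₂ : SimpleGraph V₂) (B : Set V₂) :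
    G₂.induce B ≃g (joinGraph G₁ G₂).induce (Sum.inr '' B) where
  toEquiv := Equiv.Set.image Sum.inr B Sum.inr_injective
  map_rel_iff' := by
    rintro ⟨a, ha⟩ ⟨b, hb⟩
    simp [Equiv.Set.image, joinGraph, Equiv.Set.imageOfInjOn]

noncomputable def inlInduceIso {V₁ V₂ : Type*} (G₁ : SimpleGraph V₁) (G₂ : SimpleGraph V₂) (B : Set V₁) :
    G₁.induce B ≃g (joinGraph G₁ G₂).induce (Sum.inl '' B) where
  toEquiv := Equiv.Set.image Sum.inl B Sum.inl_injective
  map_rel_iff' := by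
    rintro ⟨a, ha⟩ ⟨b, hb⟩
    simp [Equiv.Set.image, joinGraph, Equiv.Set.imageOfInjOn]

def sigmaInduceIso {ι : Type*} {V : ι → Type*} (H : ∀ i, SimpleGraph (V i)) (S : Set (Σ i, V i)) :
    (sigmaGraph H).induce S ≃g
      sigmaGraph (fun i => (H i).induce {v | (⟨i, v⟩ : Σ i, V i) ∈ S}) where
  toEquiv :=
    { toFun := fun x => ⟨x.1.1, ⟨x.1.2, by cases x with | mk v hv => cases v; exact hv⟩⟩
      invFun := fun y => ⟨⟨y.1, y.2.1⟩, y.2.2⟩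
      left_inv := by rintro ⟨⟨i, v⟩, h⟩; rfl
      right_inv := by rintro ⟨i, v, h⟩; rfl }
  map_rel_iff' := by
    rintro ⟨⟨i, v⟩, hv⟩ ⟨⟨j, w⟩, hw⟩
    constructor
    · rintro ⟨h, hadj⟩
      dsimp at h
      subst h
      exact ⟨rfl, hadj⟩
    · rintro ⟨h, hadj⟩
      dsimp at h
      subst h
      exact ⟨rfl, hadj⟩

def sigmaHomInj {ι : Type*} {V : ι → Type*} (G : ∀ i, SimpleGraph (V i)) (i : ι) :
    G i →g sigmaGraph G where
  toFun := fun v => ⟨i, v⟩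
  map_rel' := fun h => ⟨rfl, h⟩

lemma sigma_walk_eq {ι : Type*} {V : ι → Type*} (G : ∀ i, SimpleGraph (V i))
    {v w : Σ i, V i} (p : (sigmaGraph G).Walk v w) :
    (⟨v.1, (G v.1).connectedComponentMk v.2⟩ : Σ i, (G i).ConnectedComponent)
      = ⟨w.1, (G w.1).connectedComponentMk w.2⟩ := by
  induction p with
  | nil => rfl
  | @cons a b c h p ih =>
    refine Eq.trans ?_ ih
    obtain ⟨a1, a2⟩ := a
    obtain ⟨b1, b2⟩ := b
    obtain ⟨h1, h2⟩ := h
    dsimp at h1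
    subst h1
    exact congrArg (Sigma.mk a1) (ConnectedComponent.sound h2.reachable)

noncomputable def ccSigma {ι : Type*} {V : ι → Type*} (G : ∀ i, SimpleGraph (V i)) :
    (sigmaGraph G).ConnectedComponent ≃ Σ i, (G i).ConnectedComponent where
  toFun := ConnectedComponent.lift
    (fun v => ⟨v.1, (G v.1).connectedComponentMk v.2⟩)
    (fun v w p _ => sigma_walk_eq G p)
  invFun := fun y => ConnectedComponent.map (sigmaHomInj G y.1) y.2
  left_inv := by
    intro c
    refine c.ind (fun v => ?_)
    obtain ⟨i, a⟩ := v
    rfl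
  right_inv := by
    rintro ⟨i, c⟩
    refine c.ind (fun a => ?_)
    rfl

lemma nc_sigma {ι : Type*} [Fintype ι] {V : ι → Type*} [∀ i, Finite (V i)]
    (H : ∀ i, SimpleGraph (V i)) (S : Set (Σ i, V i)) :
    nc (sigmaGraph H) S = ∑ i, nc (H i) {v | (⟨i, v⟩ : Σ i, V i) ∈ S} := by
  unfold nc
  rw [Nat.card_congr ((sigmaInduceIso H S).connectedComponentEquiv.trans (ccSigma _))]
  exact nat_card_sigma _

lemma join_induce_connected {V₁ V₂ : Type*} (G₁ : SimpleGraph V₁) (G₂ : SimpleGraph V₂)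
    {s : Set (V₁ ⊕ V₂)} (h1 : ∃ a, Sum.inl a ∈ s) (h2 : ∃ b, Sum.inr b ∈ s) :
    ((joinGraph G₁ G₂).induce s).Connected := by
  obtain ⟨a, ha⟩ := h1; obtain ⟨b, hb⟩ := h2
  rw [connected_iff]
  refine ⟨?_, ⟨⟨_, ha⟩⟩⟩
  have key : ∀ x : s, ((joinGraph G₁ G₂).induce s).Reachable x ⟨Sum.inl a, ha⟩ := by
    rintro ⟨(c | c), hc⟩
    · exact ((show ((joinGraph G₁ G₂).induce s).Adj ⟨Sum.inl c, hc⟩ ⟨Sum.inr b, hb⟩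
          from trivial).reachable).trans
        ((show ((joinGraph G₁ G₂).induce s).Adj ⟨Sum.inr b, hb⟩ ⟨Sum.inl a, ha⟩
          from trivial).reachable)
    · exact (show ((joinGraph G₁ G₂).induce s).Adj ⟨Sum.inr c, hc⟩ ⟨Sum.inl a, ha⟩
        from trivial).reachable
  intro x y
  exact (key x).trans (key y).symm

lemma nc_univ_of_connected {W : Type*} {G : SimpleGraph W} (h : G.Connected) :
    nc G Set.univ = 1 :=
  nc_eq_one_of_connected ((induceUnivIso G).connected_iff.mpr h)

lemma nc_sigma_union_single {ι : Type*} [Fintype ι] [DecidableEq ι] {V : ι → Type*}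
    [∀ i, Finite (V i)] (H : ∀ i, SimpleGraph (V i)) (C : Set (Σ i, V i)) (j : ι) (v : V j) :
    (nc (sigmaGraph H) (C ∪ {⟨j, v⟩}) < nc (sigmaGraph H) C ↔
      nc (H j) ({w | (⟨j, w⟩ : Σ i, V i) ∈ C} ∪ {v}) <
        nc (H j) {w | (⟨j, w⟩ : Σ i, V i) ∈ C}) := by
  rw [nc_sigma, nc_sigma]
  have hfj : {w | (⟨j, w⟩ : Σ i, V i) ∈ C ∪ {⟨j, v⟩}}
      = {w | (⟨j, w⟩ : Σ i, V i) ∈ C} ∪ {v} := by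
    ext w
    simp [Sigma.mk.inj_iff]
  have hfi : ∀ i, i ≠ j →
      {w | (⟨i, w⟩ : Σ i, V i) ∈ C ∪ {⟨j, v⟩}} = {w | (⟨i, w⟩ : Σ i, V i) ∈ C} := by
    intro i hij
    ext w
    simp [Sigma.mk.inj_iff, hij]
  rw [← Finset.add_sum_erase _ _ (Finset.mem_univ j),
    ← Finset.add_sum_erase _ (fun i => nc (H i) {v | (⟨i, v⟩ : Σ i, V i) ∈ C})
      (Finset.mem_univ j), hfj]
  have heq : ∑ i ∈ Finset.univ.erase j, nc (H i) {w | (⟨i, w⟩ : Σ i, V i) ∈ C ∪ {⟨j, v⟩}}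
      = ∑ i ∈ Finset.univ.erase j, nc (H i) {w | (⟨i, w⟩ : Σ i, V i) ∈ C} := by
    refine Finset.sum_congr rfl (fun i hi => ?_)
    rw [hfi i (Finset.ne_of_mem_erase hi)]
  rw [heq]
  omega

end MyAux

/-- the nonempty sets with the cut point property for the join of a connected
graph `G₁` with a disjoint union `⨆ i, H i` of `r ≥ 2` connected graphs. -/
theorem stmt2 {V₀ : Type*} [Fintype V₀] {r : ℕ} (hr : 2 ≤ r)
    {V : Fin r → Type*} [∀ i, Fintype (V i)]
    (G₁ : SimpleGraph V₀) (H : ∀ i, SimpleGraph (V i))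
    (hG₁ : G₁.Connected) (hH : ∀ i, (H i).Connected)
    (T : Set (V₀ ⊕ Σ i, V i)) (hT : T.Nonempty) :
    CutPointProperty (joinGraph G₁ (sigmaGraph H)) T ↔
      (∃ T' : ∀ i, Set (V i), (∀ i, CutPointProperty (H i) (T' i)) ∧
        T = Set.range Sum.inl ∪ Sum.inr '' {x : Σ i, V i | x.2 ∈ T' x.1}) ∨
      (∃ T₀ : Set V₀, T₀.Nonempty ∧ CutPointProperty G₁ T₀ ∧
        T = Sum.inl '' T₀ ∪ Set.range Sum.inr) := by
  classical
  set G := joinGraph G₁ (sigmaGraph H) with hGdef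
  haveI : Nonempty V₀ := hG₁.nonempty
  haveI : ∀ i, Nonempty (V i) := fun i => (hH i).nonempty
  have ncInr : ∀ D : Set (Σ i, V i), nc G (Sum.inr '' D) = nc (sigmaGraph H) D :=
    fun D => (nc_congr (inrInduceIso G₁ (sigmaGraph H) D)).symm
  have ncInl : ∀ D : Set V₀, nc G (Sum.inl '' D) = nc G₁ D :=
    fun D => (nc_congr (inlInduceIso G₁ (sigmaGraph H) D)).symm
  constructor
  · intro hcpp
    by_cases hinl : ∃ a, Sum.inl a ∈ Tᶜ
    · by_cases hinr : ∃ x : Σ i, V i, Sum.inr x ∈ Tᶜ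
      · exfalso
        obtain ⟨i, hi⟩ := hT
        have h1 := hcpp i hi
        have hc1 : nc G Tᶜ = 1 :=
          nc_eq_one_of_connected (join_induce_connected _ _ hinl hinr)
        have h2 : 1 ≤ nc G (Tᶜ ∪ {i}) := one_le_nc _ ⟨i, Or.inr rfl⟩
        omega
      · -- Case 2 : every inr vertex is in T
        simp only [not_exists, Set.mem_compl_iff, not_not] at hinr
        refine Or.inr ⟨{a | Sum.inl a ∈ T}, ?_, ?_, ?_⟩
        · -- nonempty
          by_contra h0
          rw [Set.not_nonempty_iff_eq_empty] at h0
          obtain ⟨i, hi⟩ := hT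
          rcases i with a | x
          · have : a ∈ ({a | Sum.inl a ∈ T} : Set V₀) := hi
            rw [h0] at this
            exact this
          · have hTc : Tᶜ = Sum.inl '' (Set.univ : Set V₀) := by
              ext z
              rcases z with a | x'
              · have : Sum.inl a ∉ T := by
                  intro hmem
                  have : a ∈ ({a | Sum.inl a ∈ T} : Set V₀) := hmem
                  rw [h0] at this
                  exact this
                simp [this]
              · simp [hinr x']
            have hlt := hcpp (Sum.inr x) hi
            have hc1 : nc G Tᶜ = 1 := by
              rw [hTc, ncInl]
              exact nc_univ_of_connected hG₁
            have hc2 : nc G (Tᶜ ∪ {Sum.inr x}) = 1 := by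
              refine nc_eq_one_of_connected (join_induce_connected _ _
                ⟨Classical.arbitrary V₀, Or.inl ?_⟩ ⟨x, Or.inr rfl⟩)
              rw [hTc]
              exact ⟨Classical.arbitrary V₀, Set.mem_univ _, rfl⟩
            omega
        · -- cut point property for T₀
          intro a ha
          have hlt := hcpp (Sum.inl a) ha
          have hTc : Tᶜ = Sum.inl '' ({a | Sum.inl a ∈ T} : Set V₀)ᶜ := by
            ext z
            rcases z with b | x
            · simp
            · simp [hinr x]
          rw [hTc, show Sum.inl '' ({a | Sum.inl a ∈ T} : Set V₀)ᶜ ∪ {Sum.inl a}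
              = Sum.inl '' (({a | Sum.inl a ∈ T} : Set V₀)ᶜ ∪ {a}) from by
                rw [Set.image_union, Set.image_singleton], ncInl, ncInl] at hlt
          exact hlt
        · -- T = inl '' T₀ ∪ range inr
          ext z
          rcases z with a | x
          · simp
          · simp [hinr x]
    · -- Case 1 : every inl vertex is in T
      simp only [not_exists, Set.mem_compl_iff, not_not] at hinl
      refine Or.inl ⟨fun i => {v | Sum.inr ⟨i, v⟩ ∈ T}, ?_, ?_⟩
      · intro j v hv
        have hlt := hcpp (Sum.inr ⟨j, v⟩) hv
        have hTc : Tᶜ = Sum.inr '' {x : Σ i, V i | Sum.inr x ∉ T} := by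
          ext z
          rcases z with a | x
          · simp [hinl a]
          · simp
        rw [hTc, show Sum.inr '' {x : Σ i, V i | Sum.inr x ∉ T} ∪ {Sum.inr ⟨j, v⟩}
            = Sum.inr '' ({x : Σ i, V i | Sum.inr x ∉ T} ∪ {⟨j, v⟩}) from by
              rw [Set.image_union, Set.image_singleton], ncInr, ncInr] at hlt
        have hkey := (nc_sigma_union_single H {x : Σ i, V i | Sum.inr x ∉ T} j v).mp hlt
        have hfib : {w | (⟨j, w⟩ : Σ i, V i) ∈ {x : Σ i, V i | Sum.inr x ∉ T}}
            = ({v | Sum.inr ⟨j, v⟩ ∈ T} : Set (V j))ᶜ := rfl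
        rwa [hfib] at hkey
      · ext z
        rcases z with a | ⟨j, w⟩
        · simp [hinl a]
        · constructor
          · intro hmem
            exact Or.inr ⟨⟨j, w⟩, hmem, rfl⟩
          · rintro (⟨a, ha⟩ | ⟨⟨j', w'⟩, hw', heq⟩)
            · exact absurd ha (by simp)
            · obtain ⟨rfl⟩ : (⟨j', w'⟩ : Σ i, V i) = ⟨j, w⟩ := by
                injection heq
              exact hw'
  · rintro (⟨T', hT', rfl⟩ | ⟨T₀, hT₀ne, hT₀cpp, rfl⟩)
    · -- backward, case 1
      have hTc : (Set.range (Sum.inl : V₀ → V₀ ⊕ Σ i, V i)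
            ∪ Sum.inr '' {x : Σ i, V i | x.2 ∈ T' x.1})ᶜ
          = Sum.inr '' {x : Σ i, V i | x.2 ∈ (T' x.1)ᶜ} := by
        ext z
        rcases z with a | ⟨j, w⟩
        · simp
        · constructor
          · intro hmem
            refine ⟨⟨j, w⟩, ?_, rfl⟩
            intro hIn
            exact hmem (Or.inr ⟨⟨j, w⟩, hIn, rfl⟩)
          · rintro ⟨⟨j', w'⟩, hw', heq⟩ hmem
            obtain ⟨rfl⟩ : (⟨j', w'⟩ : Σ i, V i) = ⟨j, w⟩ := by injection heq
            rcases hmem with ⟨a, ha⟩ | ⟨⟨j'', w''⟩, hw'', heq2⟩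
            · exact absurd ha (by simp)
            · obtain ⟨rfl⟩ : (⟨j'', w''⟩ : Σ i, V i) = ⟨j, w⟩ := by injection heq2
              exact hw' hw''
      have hcomp_ne : ∀ j, ((T' j) : Set (V j))ᶜ.Nonempty := fun j =>
        cpp_compl_nonempty (hT' j)
      intro i hi
      rcases i with a | ⟨j, v⟩
      · -- i = inl a
        set j0 : Fin r := ⟨0, by omega⟩
        obtain ⟨w0, hw0⟩ := hcomp_ne j0
        have h1 : nc G ((Set.range Sum.inl ∪ Sum.inr '' {x : Σ i, V i | x.2 ∈ T' x.1})ᶜ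
            ∪ {Sum.inl a}) = 1 := by
          refine nc_eq_one_of_connected (join_induce_connected _ _
            ⟨a, Or.inr rfl⟩ ⟨⟨j0, w0⟩, Or.inl ?_⟩)
          rw [hTc]
          exact ⟨⟨j0, w0⟩, hw0, rfl⟩
        have h2 : 2 ≤ nc G (Set.range Sum.inl ∪ Sum.inr '' {x : Σ i, V i | x.2 ∈ T' x.1})ᶜ := by
          rw [hTc, ncInr, nc_sigma]
          have hterm : ∀ j ∈ Finset.univ, 1 ≤ nc (H j)
              {w | (⟨j, w⟩ : Σ i, V i) ∈ {x : Σ i, V i | x.2 ∈ (T' x.1)ᶜ}} :=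
            fun j _ => one_le_nc _ (hcomp_ne j)
          have hs := Finset.card_nsmul_le_sum Finset.univ
            (fun j => nc (H j) {w | (⟨j, w⟩ : Σ i, V i) ∈ {x : Σ i, V i | x.2 ∈ (T' x.1)ᶜ}})
            1 hterm
          simp only [smul_eq_mul, mul_one, Finset.card_univ, Fintype.card_fin] at hs
          omega
        omega
      · -- i = inr ⟨j, v⟩
        have hv : v ∈ T' j := by
          rcases hi with ⟨a, ha⟩ | ⟨⟨j', w'⟩, hw', heq⟩
          · exact absurd ha (by simp)
          · obtain ⟨rfl⟩ : (⟨j', w'⟩ : Σ i, V i) = ⟨j, v⟩ := by injection heq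
            exact hw'
        rw [hTc, show Sum.inr '' {x : Σ i, V i | x.2 ∈ (T' x.1)ᶜ} ∪ {Sum.inr ⟨j, v⟩}
            = Sum.inr '' ({x : Σ i, V i | x.2 ∈ (T' x.1)ᶜ} ∪ {⟨j, v⟩}) from by
              rw [Set.image_union, Set.image_singleton], ncInr, ncInr]
        refine (nc_sigma_union_single H {x : Σ i, V i | x.2 ∈ (T' x.1)ᶜ} j v).mpr ?_
        have hfib : {w | (⟨j, w⟩ : Σ i, V i) ∈ {x : Σ i, V i | x.2 ∈ (T' x.1)ᶜ}}
            = ((T' j) : Set (V j))ᶜ := rfl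
        rw [hfib]
        exact hT' j v hv
    · -- backward, case 2
      have hTc : (Sum.inl '' T₀ ∪ Set.range (Sum.inr : (Σ i, V i) → V₀ ⊕ Σ i, V i))ᶜ
          = Sum.inl '' T₀ᶜ := by
        ext z
        rcases z with a | x
        · simp
        · simp
      have hT₀c_ne : T₀ᶜ.Nonempty := cpp_compl_nonempty hT₀cpp
      intro i hi
      rcases i with a | y
      · have ha : a ∈ T₀ := by
          rcases hi with ⟨a', ha', heq⟩ | ⟨x, hx⟩
          · injection heq with h
            subst h
            exact ha'
          · exact absurd hx (by simp)
        rw [hTc, show Sum.inl '' T₀ᶜ ∪ {Sum.inl a} = Sum.inl '' (T₀ᶜ ∪ {a}) from by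
          rw [Set.image_union, Set.image_singleton], ncInl, ncInl]
        exact hT₀cpp a ha
      · obtain ⟨b, hb⟩ := hT₀c_ne
        have h1 : nc G ((Sum.inl '' T₀ ∪ Set.range Sum.inr)ᶜ ∪ {Sum.inr y}) = 1 := by
          refine nc_eq_one_of_connected (join_induce_connected _ _
            ⟨b, Or.inl ?_⟩ ⟨y, Or.inr rfl⟩)
          rw [hTc]
          exact ⟨b, hb, rfl⟩
        have h2 : 2 ≤ nc G (Sum.inl '' T₀ ∪ Set.range Sum.inr)ᶜ := by
          rw [hTc, ncInl]
          exact cpp_compl_two_le hT₀cpp hT₀ne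
        omega
end

section
/- Let $G$ be a connected generalized block graph on $[n]$ whose binomial edge ideal is unmixed, equivalently, such that $c_G(T) = |T| + 1$ for every $T \in \mathcal{C}(G)$. Then for every $t$-minimal cut set $A$ of $G$, one has $|A| = t - 1$. -/
open SimpleGraph Set

section Aux

variable {V : Type*}

/-- Any clique in a finite graph extends to a maximal clique. -/
lemma exists_maxClique [Finite V] (G : SimpleGraph V) {K : Set V} (hK : G.IsClique K) :
    ∃ F, Maximal G.IsClique F ∧ K ⊆ F := by
  have hfin : {K' : Set V | G.IsClique K' ∧ K ⊆ K'}.Finite := Set.toFinite _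
  obtain ⟨F, hFm⟩ := hfin.exists_maximal ⟨K, hK, le_refl K⟩
  have hF := hFm.1
  refine ⟨F, ⟨hF.1, fun K' hK' hle => ?_⟩, hF.2⟩
  exact hFm.2 ⟨hK', hF.2.trans hle⟩ hle

lemma pair_clique (G : SimpleGraph V) {a b : V} (h : G.Adj a b) : G.IsClique {a, b} := by
  intro x hx y hy hxy
  rcases hx with rfl | hx
  · rcases hy with rfl | hy
    · exact absurd rfl hxy
    · rcases hy with rfl; exact h
  · rcases hx with rfl
    rcases hy with rfl | hy
    · exact h.symm
    · rcases hy with rfl; exact absurd rfl hxy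

lemma triple_clique (G : SimpleGraph V) {a b c : V} (hab : G.Adj a b) (hac : G.Adj a c)
    (hbc : G.Adj b c) : G.IsClique {a, b, c} := by
  intro x hx y hy hxy
  rcases hx with rfl | rfl | rfl <;> rcases hy with rfl | rfl | rfl <;>
    first
      | exact absurd rfl hxy
      | assumption
      | exact hab.symm
      | exact hac.symm
      | exact hbc.symm

/-- take-style helper: there is a walk of length `i` from the start to `p.getVert i`. -/
lemma exists_walk_take {G : SimpleGraph V} :
    ∀ {u v : V} (p : G.Walk u v) (i : ℕ), i ≤ p.length →
      ∃ q : G.Walk u (p.getVert i), q.length = i := by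
  intro u v p
  induction p with
  | nil =>
    intro i hi
    simp only [Walk.length_nil, Nat.le_zero] at hi
    subst hi
    exact ⟨Walk.nil, rfl⟩
  | cons h p ih =>
    intro i hi
    cases i with
    | zero => exact ⟨Walk.nil, rfl⟩
    | succ i =>
      obtain ⟨q, hq⟩ := ih i (by simpa [Nat.succ_le_succ_iff] using hi)
      exact ⟨Walk.cons h q, by simp [hq]⟩

/-- drop-style helper: there is a walk of length `p.length - i` from `p.getVert i` to the end. -/
lemma exists_walk_drop {G : SimpleGraph V} :
    ∀ {u v : V} (p : G.Walk u v) (i : ℕ), i ≤ p.length →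
      ∃ q : G.Walk (p.getVert i) v, q.length = p.length - i := by
  intro u v p
  induction p with
  | nil =>
    intro i hi
    simp only [Walk.length_nil, Nat.le_zero] at hi
    subst hi
    exact ⟨Walk.nil, rfl⟩
  | cons h p ih =>
    intro i hi
    cases i with
    | zero => exact ⟨Walk.cons h p, (Nat.sub_zero _).symm⟩
    | succ i =>
      obtain ⟨q, hq⟩ := ih i (by simpa [Nat.succ_le_succ_iff] using hi)
      exact ⟨q, by simpa using hq⟩

lemma path_getVert_injOn {G : SimpleGraph V} :
    ∀ {u v : V} {p : G.Walk u v}, p.IsPath → ∀ i j, i ≤ p.length → j ≤ p.length →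
      p.getVert i = p.getVert j → i = j := by
  intro u v p
  induction p with
  | nil =>
    intro _ i j hi hj _
    simp only [Walk.length_nil, Nat.le_zero] at hi hj
    omega
  | cons h p ih =>
    intro hp i j hi hj hij
    rw [Walk.cons_isPath_iff] at hp
    cases i with
    | zero =>
      cases j with
      | zero => rfl
      | succ j =>
        exfalso
        apply hp.2
        rw [Walk.mem_support_iff_exists_getVert]
        exact ⟨j, by simpa using hij.symm, by simpa [Nat.succ_le_succ_iff] using hj⟩
    | succ i =>
      cases j with
      | zero =>
        exfalso
        apply hp.2
        rw [Walk.mem_support_iff_exists_getVert]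
        exact ⟨i, by simpa using hij, by simpa [Nat.succ_le_succ_iff] using hi⟩
      | succ j =>
        have := ih hp.1 i j (by simpa [Nat.succ_le_succ_iff] using hi)
          (by simpa [Nat.succ_le_succ_iff] using hj) (by simpa using hij)
        omega

/-- boundary lemma -/
lemma reach_out {G : SimpleGraph V} {s : Set V} :
    ∀ {u b : V} (w : G.Walk u b) (hu : u ∈ s), b ∉ s →
    ∃ (u' a : V) (hu' : u' ∈ s), a ∉ s ∧ G.Adj u' a ∧
      (G.induce s).Reachable ⟨u, hu⟩ ⟨u', hu'⟩ := by
  intro u b w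
  induction w with
  | nil => intro hu hb; exact absurd hu hb
  | @cons u v b h p ih =>
    intro hu hb
    by_cases hv : v ∈ s
    · obtain ⟨u', a, hu', ha, hadj, hr⟩ := ih hv hb
      have hadj' : (G.induce s).Adj ⟨u, hu⟩ ⟨v, hv⟩ := by simpa using h
      exact ⟨u', a, hu', ha, hadj, hadj'.reachable.trans hr⟩
    · exact ⟨u, v, hu, hv, h, Reachable.refl _⟩

section NoConfig

variable {V : Type*} [Fintype V] {G : SimpleGraph V} {t : ℕ} {A : Set V}

lemma mem_S_of_touch (hA : IsTMinCut G t A) {F : Set V} (hmax : MaxClique G F)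
    {a : V} (ha : a ∈ A) (haF : a ∈ F) : A ⊆ F := by
  by_contra hnot
  have h := hA.2.2.2 F hmax hnot
  have : a ∈ F ∩ A := ⟨haF, ha⟩
  rw [h] at this
  exact this

lemma no_config (hG : GenBlockGraph G) (hA : IsTMinCut G t A) (hAne : A.Nonempty) :
    ¬ ∃ (F F' : Set V) (x y : ↥(Aᶜ : Set V)),
      (MaxClique G F ∧ A ⊆ F) ∧ (MaxClique G F' ∧ A ⊆ F') ∧ F ≠ F' ∧
      ↑x ∈ F ∧ ↑y ∈ F' ∧ (G.induce (Aᶜ : Set V)).Reachable x y := by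
  classical
  obtain ⟨a₀, ha₀⟩ := hAne
  obtain ⟨hconn, hchordal, hgb⟩ := hG
  intro hcfg
  set L : Set ℕ := {m | ∃ (F F' : Set V) (x y : ↥(Aᶜ : Set V))
      (p : (G.induce (Aᶜ : Set V)).Walk x y),
      (MaxClique G F ∧ A ⊆ F) ∧ (MaxClique G F' ∧ A ⊆ F') ∧ F ≠ F' ∧
      ↑x ∈ F ∧ ↑y ∈ F' ∧ p.IsPath ∧ p.length = m} with hL
  have hLne : L.Nonempty := by
    obtain ⟨F, F', x, y, hF, hF', hFF', hxF, hyF', hr⟩ := hcfg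
    obtain ⟨p⟩ := hr
    exact ⟨p.bypass.length, F, F', x, y, p.bypass, hF, hF', hFF', hxF, hyF',
      p.bypass_isPath, rfl⟩
  set m₀ := sInf L with hm₀
  obtain ⟨F, F', x, y, p, hF, hF', hFF', hxF, hyF', hpath, hplen⟩ : m₀ ∈ L :=
    Nat.sInf_mem hLne
  have shorter : ∀ (F₁ F₂ : Set V) (x₁ y₁ : ↥(Aᶜ : Set V))
      (q : (G.induce (Aᶜ : Set V)).Walk x₁ y₁),
      (MaxClique G F₁ ∧ A ⊆ F₁) → (MaxClique G F₂ ∧ A ⊆ F₂) → F₁ ≠ F₂ →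
      ↑x₁ ∈ F₁ → ↑y₁ ∈ F₂ → q.length < m₀ → False := by
    intro F₁ F₂ x₁ y₁ q h1 h2 h12 hx1 hy1 hlt
    have hmem : q.bypass.length ∈ L :=
      ⟨F₁, F₂, x₁, y₁, q.bypass, h1, h2, h12, hx1, hy1, q.bypass_isPath, rfl⟩
    have h1' := Nat.sInf_le hmem
    have h2' := q.length_bypass_le
    omega
  -- a₀ is adjacent to ↑x and ↑y
  have hxA : (↑x : V) ∉ A := x.2
  have hyA : (↑y : V) ∉ A := y.2
  have hax : G.Adj a₀ ↑x := hF.1.1 (hF.2 ha₀) hxF (fun h => hxA (h ▸ ha₀))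
  have hay : G.Adj a₀ ↑y := hF'.1.1 (hF'.2 ha₀) hyF' (fun h => hyA (h ▸ ha₀))
  by_cases hm0 : m₀ = 0
  · -- x = y lies in F ∩ F', hence in all of S, hence in A: contradiction
    have hxy : x = y := by
      have h1 := p.getVert_zero
      have h2 := p.getVert_length
      rw [hplen, hm0] at h2
      exact h1.symm.trans h2
    subst hxy
    have hvint : (↑x : V) ∈ ⋂₀ {F : Set V | MaxClique G F ∧ A ⊆ F} := by
      rw [Set.mem_sInter]
      rintro F₄ ⟨hF₄, hAF₄⟩
      by_cases h4 : F₄ = F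
      · exact h4 ▸ hxF
      by_cases h4' : F₄ = F'
      · exact h4' ▸ hyF'
      have hgb' := hgb F F' F₄ hF.1 hF'.1 hF₄ hFF' (fun h => h4 h.symm) (fun h => h4' h.symm)
        ⟨a₀, ⟨hF.2 ha₀, hF'.2 ha₀⟩, hAF₄ ha₀⟩
      have : (↑x : V) ∈ F ∩ F₄ := hgb'.1 ▸ (⟨hxF, hyF'⟩ : (↑x : V) ∈ F ∩ F')
      exact this.2
    rw [hA.2.2.1] at hvint
    exact hxA hvint
  by_cases hm1 : m₀ = 1
  · -- x and y are adjacent; extend {a₀, x, y} to a maximal clique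
    have e1 : p.getVert 1 = y := p.getVert_of_length_le (by rw [hplen, hm1])
    have hadj : (G.induce (Aᶜ : Set V)).Adj x y := by
      have := p.adj_getVert_succ (i := 0) (by rw [hplen, hm1]; norm_num)
      rwa [p.getVert_zero, e1] at this
    have hGadj : G.Adj ↑x ↑y := by simpa using hadj
    obtain ⟨F'', hcl, hsub⟩ := exists_maxClique G (triple_clique G hax hay hGadj)
    have hAF'' : A ⊆ F'' := mem_S_of_touch hA hcl ha₀ (hsub (by simp))
    have hxF'' : (↑x : V) ∈ F'' := hsub (by simp)
    have hyF'' : (↑y : V) ∈ F'' := hsub (by simp)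
    by_cases hF''F : F'' = F
    · exact shorter F F' y y Walk.nil hF hF' hFF' (hF''F ▸ hyF'') hyF'
        (by rw [hm1]; norm_num)
    · exact shorter F F'' x x Walk.nil hF ⟨hcl, hAF''⟩ (fun h => hF''F h.symm) hxF hxF''
        (by rw [hm1]; norm_num)
  have hm2 : 2 ≤ m₀ := by omega
  -- the cycle a₀, x = p₀, p₁, ..., p_{m₀} = y
  set n := m₀ + 2 with hn
  set c : ℕ → V := fun i => Nat.casesOn i a₀ (fun k => ↑(p.getVert k)) with hc
  have hc0 : c 0 = a₀ := rfl
  have hcs : ∀ k, c (k + 1) = ↑(p.getVert k) := fun k => rfl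
  have hinj : Set.InjOn c (Set.Iio n) := by
    intro i hi j hj hij
    simp only [Set.mem_Iio] at hi hj
    rcases i with _ | i <;> rcases j with _ | j
    · rfl
    · exfalso
      rw [hc0, hcs] at hij
      exact (p.getVert j).2 (hij ▸ ha₀)
    · exfalso
      rw [hc0, hcs] at hij
      exact (p.getVert i).2 (hij.symm ▸ ha₀)
    · rw [hcs, hcs] at hij
      have := path_getVert_injOn hpath i j (by omega) (by omega)
        (Subtype.val_injective hij)
      omega
  have hadjcyc : ∀ i < n, G.Adj (c i) (c ((i + 1) % n)) := by
    intro i hi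
    rcases i with _ | i
    · have hmod : (0 + 1) % n = 0 + 1 := Nat.mod_eq_of_lt (by omega)
      rw [hmod, hc0, hcs 0, p.getVert_zero]
      exact hax
    · 
      by_cases hlast : i + 1 = n - 1
      · have hmod : (i + 1 + 1) % n = 0 := by
          rw [show i + 1 + 1 = n by omega, Nat.mod_self]
        rw [hmod, hc0, hcs, show i = p.length by omega, p.getVert_length]
        exact hay.symm
      · have hmod : (i + 1 + 1) % n = i + 2 := Nat.mod_eq_of_lt (by omega)
        rw [hmod, hcs, show i + 2 = (i + 1) + 1 from rfl, hcs]
        have hadj2 : (G.induce (Aᶜ : Set V)).Adj (p.getVert i) (p.getVert (i + 1)) :=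
          p.adj_getVert_succ (by omega)
        simpa using hadj2
  obtain ⟨i, hi, j, hj, hji, hj1, hi1, hchord⟩ :=
    hchordal n (by omega) c hinj hadjcyc
  -- helper: chords incident to a₀
  have hchord_a : ∀ l, 1 ≤ l → l + 1 ≤ m₀ → G.Adj a₀ ↑(p.getVert l) → False := by
    intro l hl1 hl2 hadjal
    obtain ⟨F''', hcl''', hsub'''⟩ := exists_maxClique G (pair_clique G hadjal)
    have hAF''' : A ⊆ F''' := mem_S_of_touch hA hcl''' ha₀ (hsub''' (by simp))
    have hzF : (↑(p.getVert l) : V) ∈ F''' := hsub''' (by simp)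
    by_cases hFF : F''' = F
    · obtain ⟨q, hq⟩ := exists_walk_drop p l (by omega)
      exact shorter F F' (p.getVert l) y q hF hF' hFF' (hFF ▸ hzF) hyF' (by omega)
    · obtain ⟨q, hq⟩ := exists_walk_take p l (by omega)
      exact shorter F F''' x (p.getVert l) q hF ⟨hcl''', hAF'''⟩ (fun h => hFF h.symm)
        hxF hzF (by omega)
  -- helper: chords between two path vertices
  have hchord_mid : ∀ k l, k + 2 ≤ l → l ≤ m₀ →
      G.Adj ↑(p.getVert k) ↑(p.getVert l) → False := by
    intro k l hkl hl hadjkl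
    have hadj' : (G.induce (Aᶜ : Set V)).Adj (p.getVert k) (p.getVert l) := by
      simpa using hadjkl
    obtain ⟨q₁, hq₁⟩ := exists_walk_take p k (by omega)
    obtain ⟨q₂, hq₂⟩ := exists_walk_drop p l (by omega)
    have q := q₁.append (Walk.cons hadj' q₂)
    refine shorter F F' x y (q₁.append (Walk.cons hadj' q₂)) hF hF' hFF' hxF hyF' ?_
    rw [Walk.length_append, Walk.length_cons]
    omega
  -- now analyze the chord
  rcases i with _ | i <;> rcases j with _ | j
  · exact hji rfl
  · have h1 : j + 1 ≠ 1 := by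
      rw [show (0 + 1) % n = 1 from Nat.mod_eq_of_lt (by omega)] at hj1
      exact hj1
    have h2 : j + 1 ≠ n - 1 := by
      intro h
      apply hi1
      rw [show j + 1 + 1 = n by omega, Nat.mod_self]
    rw [hc0, hcs] at hchord
    exact hchord_a j (by omega) (by omega) hchord
  · have h1 : i + 1 ≠ 1 := by
      intro h
      apply hi1
      rw [show (0 + 1) % n = 1 from Nat.mod_eq_of_lt (by omega)]
      exact h
    have h2 : i + 1 ≠ n - 1 := by
      intro h
      apply hj1
      rw [show i + 1 + 1 = n by omega, Nat.mod_self]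
    rw [hc0, hcs] at hchord
    exact hchord_a i (by omega) (by omega) hchord.symm
  · rw [hcs, hcs] at hchord
    rcases Nat.lt_trichotomy i j with hlt | heq | hgt
    · -- i < j : then j ≥ i + 2 would follow from j+1 ≠ (i+1)+1
      have : j + 1 ≠ i + 2 := by
        intro h
        apply hj1
        rw [show (i + 1 + 1) % n = i + 2 from Nat.mod_eq_of_lt (by omega)]
        omega
      exact hchord_mid i j (by omega) (by omega) hchord
    · exact hji (by omega)
    · have : i + 1 ≠ j + 2 := by
        intro h
        apply hi1
        rw [show (j + 1 + 1) % n = j + 2 from Nat.mod_eq_of_lt (by omega)]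
        omega
      exact hchord_mid j i (by omega) (by omega) hchord.symm

end NoConfig

lemma key_count {V : Type*} [Fintype V] {G : SimpleGraph V} {t : ℕ} {A : Set V}
    (hG : GenBlockGraph G) (hA : IsTMinCut G t A) (hAne : A.Nonempty) :
    nc G Aᶜ = t := by
  classical
  obtain ⟨⟨hcut, hmin⟩, hcard, hint, hdisj⟩ := id hA
  have hpos : 0 < nc G Aᶜ := Nat.lt_of_le_of_lt (Nat.zero_le _) hcut
  have hcompne : Nonempty ((G.induce (Aᶜ : Set V)).ConnectedComponent) :=
    (Nat.card_pos_iff.mp hpos).1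
  obtain ⟨C0⟩ := hcompne
  obtain ⟨x0, _⟩ := C0.exists_rep
  -- every vertex of Aᶜ reaches (inside Aᶜ) a vertex lying in some maximal clique containing A
  have touch : ∀ x : ↥(Aᶜ : Set V), ∃ (y : ↥(Aᶜ : Set V)) (F'' : Set V),
      (MaxClique G F'' ∧ A ⊆ F'') ∧ ↑y ∈ F'' ∧ (G.induce (Aᶜ : Set V)).Reachable x y := by
    intro x
    obtain ⟨a₀, ha₀⟩ := hAne
    obtain ⟨w⟩ := hG.1.preconnected ↑x a₀
    obtain ⟨u', a, hu', ha, hadj, hr⟩ := reach_out w x.2 (by simp [ha₀])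
    have haA : a ∈ A := by simpa using ha
    obtain ⟨F'', hcl, hsub⟩ := exists_maxClique G (pair_clique G hadj)
    have hAF : A ⊆ F'' := mem_S_of_touch hA hcl haA (hsub (by simp))
    exact ⟨⟨u', hu'⟩, F'', ⟨hcl, hAF⟩, hsub (by simp), hr⟩
  -- every maximal clique containing A has a vertex outside A
  have hFA : ∀ F : Set V, MaxClique G F → A ⊆ F → ∃ v : ↥(Aᶜ : Set V), ↑v ∈ F := by
    intro F hFmax hAF
    by_contra hnone
    push_neg at hnone
    have hFsubA : F ⊆ A := by
      intro v hv
      by_contra hvA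
      exact hnone ⟨v, hvA⟩ hv
    obtain ⟨y, F'', hS'', hyF'', _⟩ := touch x0
    have hsub' : F'' ⊆ F := hFmax.2 hS''.1.1 ((subset_antisymm hFsubA hAF) ▸ hS''.2)
    exact y.2 (hFsubA (hsub' hyF''))
  have hchoose : ∀ F : {F : Set V | MaxClique G F ∧ A ⊆ F},
      ∃ v : ↥(Aᶜ : Set V), ↑v ∈ (F : Set V) := fun F => hFA F F.2.1 F.2.2
  choose rep hrep using hchoose
  let φ : {F : Set V | MaxClique G F ∧ A ⊆ F} → (G.induce (Aᶜ : Set V)).ConnectedComponent :=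
    fun F => (G.induce (Aᶜ : Set V)).connectedComponentMk (rep F)
  have hinj : Function.Injective φ := by
    intro F₁ F₂ h
    by_contra hne12
    have hr : (G.induce (Aᶜ : Set V)).Reachable (rep F₁) (rep F₂) :=
      ConnectedComponent.exact h
    exact no_config hG hA hAne
      ⟨F₁, F₂, rep F₁, rep F₂, F₁.2, F₂.2, fun hh => hne12 (Subtype.ext hh),
        hrep F₁, hrep F₂, hr⟩
  have hsurj : Function.Surjective φ := by
    intro C
    obtain ⟨x, hx⟩ := C.exists_rep
    obtain ⟨y, F'', hS'', hyF'', hr⟩ := touch x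
    refine ⟨⟨F'', hS''⟩, ?_⟩
    have hry : (G.induce (Aᶜ : Set V)).Reachable (rep ⟨F'', hS''⟩) y := by
      by_cases heq : rep ⟨F'', hS''⟩ = y
      · exact heq ▸ Reachable.refl _
      · have : G.Adj ↑(rep ⟨F'', hS''⟩) ↑y :=
          hS''.1.1 (hrep ⟨F'', hS''⟩) hyF'' (fun hh => heq (Subtype.ext hh))
        exact Adj.reachable (by simpa using this)
      -- component computation
    show (G.induce (Aᶜ : Set V)).connectedComponentMk (rep ⟨F'', hS''⟩) = C
    exact (ConnectedComponent.eq.mpr (hry.trans hr.symm)).trans hx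
  have hbij := Nat.card_eq_of_bijective φ ⟨hinj, hsurj⟩
  have : nc G Aᶜ = Nat.card {F : Set V | MaxClique G F ∧ A ⊆ F} := hbij.symm
  rw [this, Nat.card_coe_set_eq, hcard]

end Aux

/-- in a connected generalized block graph with unmixed binomial edge ideal
(`c_G(T) = |T| + 1` for all `T ∈ 𝒞(G)`), every `t`-minimal cut set has `t - 1` elements. -/
theorem stmt6 {V : Type*} [Fintype V] (G : SimpleGraph V)
    (hG : GenBlockGraph G)
    (hunm : ∀ T : Set V, CutPointProperty G T → nc G Tᶜ = T.ncard + 1)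
    (t : ℕ) (A : Set V) (hA : IsTMinCut G t A) :
    A.ncard = t - 1 := by
  obtain ⟨⟨hcut, hmin⟩, hcard, hint, hdisj⟩ := id hA
  have hAne : A.Nonempty := by
    rcases A.eq_empty_or_nonempty with rfl | h
    · rw [IsCutSet, Set.compl_empty] at hcut
      exact absurd hcut (lt_irrefl _)
    · exact h
  have hcpp : CutPointProperty G A := by
    intro i hi
    have hB : A \ {i} ⊂ A := Set.sdiff_singleton_ssubset.mpr hi
    have hnc := hmin (A \ {i}) hB
    have hcompl : (A \ {i})ᶜ = Aᶜ ∪ {i} := by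
      rw [Set.diff_eq, Set.compl_inter, compl_compl]
    rw [IsCutSet, hcompl, not_lt] at hnc
    exact Nat.lt_of_le_of_lt hnc hcut
  have h1 := hunm A hcpp
  have h2 := key_count hG hA hAne
  omega
end

section
/- Let $H$ and $H'$ be connected graphs on disjoint vertex sets $[n_1]$ and $[n_2]$ with $n_1 \geq 2$, $n_2 \geq 1$, and let $G = H \odot H'$ be their corona. Then $c_G(T) = |T| + 1$ for all $T \in \mathcal{C}(G)$ if and only if $H$ and $H'$ are both complete graphs. -/
open SimpleGraph Set

namespace S11
variable {α : Type*}

def inclHom (Γ : SimpleGraph α) {s t : Set α} (h : s ⊆ t) :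
    Γ.induce s →g Γ.induce t where
  toFun x := ⟨x.1, h x.2⟩
  map_rel' := fun hadj => hadj

/-- constancy along walks from edge-constancy -/
lemma const_of_adj {β : Sort*} {Γ : SimpleGraph α} (f : α → β)
    (h1 : ∀ u v, Γ.Adj u v → f u = f v) {u v : α} (p : Γ.Walk u v) : f u = f v := by
  induction p with
  | nil => rfl
  | cons h p ih => exact (h1 _ _ h).trans ih

/-- number of components as card of image of a "coloring" -/
lemma nc_eq_card_image {ι : Type*} (Γ : SimpleGraph α) [Finite α] (s : Set α) (f : α → ι)
    (h1 : ∀ u v : ↥s, (Γ.induce s).Adj u v → f u.1 = f v.1)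
    (h2 : ∀ u v : ↥s, f u.1 = f v.1 → (Γ.induce s).Reachable u v) :
    nc Γ s = Nat.card ↥(f '' s) := by
  have hc : ∀ (u v : ↥s) (p : (Γ.induce s).Walk u v), p.IsPath → f u.1 = f v.1 :=
    fun u v p _ => const_of_adj (fun x : ↥s => f x.1) h1 p
  let F : (Γ.induce s).ConnectedComponent → ↥(f '' s) :=
    ConnectedComponent.lift (fun x => ⟨f x.1, mem_image_of_mem _ x.2⟩)
      (fun u v p hp => Subtype.ext (hc u v p hp))
  have hbij : Function.Bijective F := by
    constructor
    · intro c c'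
      refine ConnectedComponent.ind₂ (fun u v h => ?_) c c'
      exact ConnectedComponent.sound (h2 u v (congrArg Subtype.val h))
    · rintro ⟨i, x, hx, rfl⟩
      exact ⟨(Γ.induce s).connectedComponentMk ⟨x, hx⟩, rfl⟩
  exact Nat.card_eq_of_bijective F hbij

/-- lower bound from pairwise-unreachable set -/
lemma le_nc (Γ : SimpleGraph α) [Finite α] (s P : Set α) (hP : P ⊆ s)
    (h : ∀ (u v : α) (hu : u ∈ P) (hv : v ∈ P),
      (Γ.induce s).Reachable ⟨u, hP hu⟩ ⟨v, hP hv⟩ → u = v) :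
    P.ncard ≤ nc Γ s := by
  rw [← Nat.card_coe_set_eq]
  apply Nat.card_le_card_of_injective
    (fun x : ↥P => (Γ.induce s).connectedComponentMk ⟨x.1, hP x.2⟩)
  intro x y hxy
  exact Subtype.ext (h x.1 y.1 x.2 y.2 (ConnectedComponent.exact hxy))

/-- transfer a walk whose support lies in s to reachability in induce s -/
lemma reach_transfer {Γ : SimpleGraph α} {s t : Set α} {u v : ↥t}
    (p : (Γ.induce t).Walk u v) (hall : ∀ w ∈ p.support, (w : α) ∈ s) :
    (Γ.induce s).Reachable ⟨u.1, hall u p.start_mem_support⟩ ⟨v.1, hall v p.end_mem_support⟩ := by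
  induction p with
  | nil => rfl
  | @cons a b c h p ih =>
    have hb : (b : α) ∈ s := hall b (by simp)
    have ih' := ih (fun w hw => hall w (by simp [hw]))
    have hadj : (Γ.induce s).Adj ⟨a.1, hall a (SimpleGraph.Walk.start_mem_support _)⟩ ⟨b.1, hb⟩ := h
    exact hadj.reachable.trans ih'
/-- adding back a cut vertex merging two components strictly decreases count -/
lemma nc_union_lt (Γ : SimpleGraph α) [Finite α] {s : Set α} {x : α}
    {u v : α} (hu : u ∈ s) (hv : v ∈ s)
    (hreach : (Γ.induce (s ∪ {x})).Reachable ⟨u, Or.inl hu⟩ ⟨v, Or.inl hv⟩)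
    (hnreach : ¬ (Γ.induce s).Reachable ⟨u, hu⟩ ⟨v, hv⟩) :
    nc Γ (s ∪ {x}) < nc Γ s := by
  classical
  set Γs := Γ.induce s
  set Γt := Γ.induce (s ∪ {x})
  let φ : Γs.ConnectedComponent → Γt.ConnectedComponent :=
    ConnectedComponent.map (inclHom Γ (subset_union_left))
  have hmk : ∀ (w : α) (hw : w ∈ s),
      φ (Γs.connectedComponentMk ⟨w, hw⟩) = Γt.connectedComponentMk ⟨w, Or.inl hw⟩ := by
    intro w hw; rfl
  have hsurj : Function.Surjective φ := by
    intro c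
    refine ConnectedComponent.ind (fun w => ?_) c
    rcases hw : w.2 with hws | hwx
    · exact ⟨Γs.connectedComponentMk ⟨w.1, hws⟩, by rw [hmk]⟩
    · obtain ⟨p⟩ := hreach
      by_cases hmem : w ∈ p.support
      · have : Γt.Reachable ⟨u, Or.inl hu⟩ w := ⟨p.takeUntil w hmem⟩
        refine ⟨Γs.connectedComponentMk ⟨u, hu⟩, ?_⟩
        rw [hmk]
        exact ConnectedComponent.sound this
      · exfalso
        apply hnreach
        have hall : ∀ z ∈ p.support, (z : α) ∈ s := by
          intro z hz
          rcases z.2 with hzs | hzx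
          · exact hzs
          · exfalso; apply hmem
            have : z = w := Subtype.ext (by rw [hzx, hwx])
            rwa [← this]
        exact reach_transfer p hall
  have hne : Γs.connectedComponentMk ⟨u, hu⟩ ≠ Γs.connectedComponentMk ⟨v, hv⟩ :=
    fun h => hnreach (ConnectedComponent.exact h)
  have heq : φ (Γs.connectedComponentMk ⟨u, hu⟩) = φ (Γs.connectedComponentMk ⟨v, hv⟩) := by
    rw [hmk, hmk]; exact ConnectedComponent.sound hreach
  have hle : Nat.card Γt.ConnectedComponent ≤ Nat.card Γs.ConnectedComponent :=
    Nat.card_le_card_of_surjective φ hsurj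
  rcases lt_or_eq_of_le hle with h | h
  · exact h
  · exfalso
    have hinj : Function.Injective φ := by
      have f1 : Fintype Γs.ConnectedComponent := Fintype.ofFinite _
      have f2 : Fintype Γt.ConnectedComponent := Fintype.ofFinite _
      have hcard : Fintype.card Γs.ConnectedComponent = Fintype.card Γt.ConnectedComponent := by
        rw [← Nat.card_eq_fintype_card, ← Nat.card_eq_fintype_card]; exact h.symm
      exact ((Fintype.bijective_iff_surjective_and_card φ).2 ⟨hsurj, hcard⟩).1
    exact hne (hinj heq)

/-- if the neighbourhood of x within s is a clique, adding x cannot decrease the count -/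
lemma nc_le_nc_union (Γ : SimpleGraph α) [Finite α] {s : Set α} {x : α}
    (hclq : ∀ u v, u ∈ s → v ∈ s → Γ.Adj x u → Γ.Adj x v → u = v ∨ Γ.Adj u v) :
    nc Γ s ≤ nc Γ (s ∪ {x}) := by
  classical
  rcases eq_empty_or_nonempty s with rfl | ⟨w₀, hw₀⟩
  · have h1 : IsEmpty ↥(∅ : Set α) := by simp
    have h2 : IsEmpty (Γ.induce (∅ : Set α)).ConnectedComponent :=
      ⟨fun c => c.ind (fun w => h1.elim w)⟩
    simp [nc, Nat.card_of_isEmpty]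
  set Γs := Γ.induce s with hΓs
  set Γt := Γ.induce (s ∪ {x}) with hΓt
  obtain ⟨u₀, hu₀, hprop⟩ : ∃ u₀, u₀ ∈ s ∧ ∀ w, w ∈ s → Γ.Adj x w →
      ((w : α) = u₀ ∨ Γ.Adj w u₀) := by
    by_cases hex : ∃ u₀, u₀ ∈ s ∧ Γ.Adj x u₀
    · obtain ⟨u₀, hu₀, hadj₀⟩ := hex
      exact ⟨u₀, hu₀, fun w hws hadj => hclq w u₀ hws hu₀ hadj hadj₀⟩
    · exact ⟨w₀, hw₀, fun w hws hadj => absurd ⟨w, hws, hadj⟩ hex⟩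
  let r : ↥(s ∪ {x}) → Γs.ConnectedComponent := fun w =>
    if hw : (w : α) ∈ s then Γs.connectedComponentMk ⟨w, hw⟩
    else Γs.connectedComponentMk ⟨u₀, hu₀⟩
  have hrpos : ∀ (w : ↥(s ∪ {x})) (hw : (w : α) ∈ s),
      r w = Γs.connectedComponentMk ⟨w.1, hw⟩ := fun w hw => dif_pos hw
  have hrneg : ∀ (w : ↥(s ∪ {x})), (w : α) ∉ s →
      r w = Γs.connectedComponentMk ⟨u₀, hu₀⟩ := fun w hw => dif_neg hw
  have hwell : ∀ u v : ↥(s ∪ {x}), Γt.Adj u v → r u = r v := by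
    intro u v huv
    have hGuv : Γ.Adj u.1 v.1 := huv
    by_cases hus : (u : α) ∈ s <;> by_cases hvs : (v : α) ∈ s
    · rw [hrpos u hus, hrpos v hvs]
      exact ConnectedComponent.sound
        (SimpleGraph.Adj.reachable (by exact hGuv : Γs.Adj ⟨u.1, hus⟩ ⟨v.1, hvs⟩))
    · rw [hrpos u hus, hrneg v hvs]
      have hvx : (v : α) = x := v.2.resolve_left hvs
      have hxadj : Γ.Adj x u.1 := by have h' := hGuv.symm; rw [hvx] at h'; exact h'
      rcases hprop u.1 hus hxadj with h | h
      · exact congrArg Γs.connectedComponentMk (Subtype.ext (α := α) h)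
      · exact ConnectedComponent.sound
          (SimpleGraph.Adj.reachable (by exact h : Γs.Adj ⟨u.1, hus⟩ ⟨u₀, hu₀⟩))
    · rw [hrneg u hus, hrpos v hvs]
      have hux : (u : α) = x := u.2.resolve_left hus
      have hxadj : Γ.Adj x v.1 := by have h' := hGuv; rw [hux] at h'; exact h'
      rcases hprop v.1 hvs hxadj with h | h
      · exact (congrArg Γs.connectedComponentMk (Subtype.ext (α := α) h)).symm
      · exact (ConnectedComponent.sound
          (SimpleGraph.Adj.reachable (by exact h : Γs.Adj ⟨v.1, hvs⟩ ⟨u₀, hu₀⟩))).symm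
    · exfalso
      have hux : (u : α) = x := u.2.resolve_left hus
      have hvx : (v : α) = x := v.2.resolve_left hvs
      rw [hux, hvx] at hGuv
      exact Γ.irrefl hGuv
  have hwalk : ∀ (u v : ↥(s ∪ {x})) (p : Γt.Walk u v), p.IsPath → r u = r v := by
    intro u v p hp
    clear hp
    induction p with
    | nil => rfl
    | cons h p ih => exact (hwell _ _ h).trans ih
  let χ : Γt.ConnectedComponent → Γs.ConnectedComponent := ConnectedComponent.lift r hwalk
  have hχ : Function.Surjective χ := by
    intro c
    refine ConnectedComponent.ind (fun w => ?_) c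
    refine ⟨Γt.connectedComponentMk ⟨w.1, Or.inl w.2⟩, ?_⟩
    show r ⟨w.1, Or.inl w.2⟩ = _
    rw [hrpos _ w.2]
  exact Nat.card_le_card_of_surjective χ hχ


/-- existence of a minimal separator for a nonadjacent pair -/
lemma exists_min_sep (Γ : SimpleGraph α) [Finite α] {a b : α} (hab : a ≠ b)
    (hnadj : ¬ Γ.Adj a b) :
    ∃ A : Set α, ∃ (ha : a ∉ A) (hb : b ∉ A),
      (¬ (Γ.induce Aᶜ).Reachable ⟨a, ha⟩ ⟨b, hb⟩) ∧
      ∀ x ∈ A, (Γ.induce ((A \ {x})ᶜ)).Reachable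
        ⟨a, fun h => ha h.1⟩ ⟨b, fun h => hb h.1⟩ := by
  classical
  -- candidate sets
  let Good : Set α → Prop := fun A =>
    ∃ (ha : a ∉ A) (hb : b ∉ A), ¬ (Γ.induce Aᶜ).Reachable ⟨a, ha⟩ ⟨b, hb⟩
  have hN : Good {w | Γ.Adj a w} := by
    have ha : a ∉ {w | Γ.Adj a w} := fun h => Γ.irrefl h
    have hb : b ∉ {w | Γ.Adj a w} := hnadj
    refine ⟨ha, hb, fun hr => ?_⟩
    obtain ⟨p⟩ := hr
    cases p with
    | nil => exact hab rfl
    | cons h q =>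
      rename_i w
      have : Γ.Adj a w.1 := h
      exact w.2 this
  -- take a Good set of minimal cardinality
  have key : ∀ n (A : Set α), A.ncard ≤ n → Good A →
      ∃ B, Good B ∧ ∀ x ∈ B, ∀ (hB : Good (B \ {x})), False := by
    intro n
    induction n with
    | zero =>
      intro A hcard hA
      refine ⟨A, hA, fun x hx _ => ?_⟩
      have : A.Nonempty := ⟨x, hx⟩
      have := this.ncard_pos (Set.toFinite A)
      omega
    | succ n ih =>
      intro A hcard hA
      by_cases hmin : ∃ x ∈ A, Good (A \ {x})
      · obtain ⟨x, hx, hgood⟩ := hmin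
        have hlt : (A \ {x}).ncard < A.ncard :=
          Set.ncard_diff_singleton_lt_of_mem hx (Set.toFinite A)
        exact ih (A \ {x}) (by omega) hgood
      · push_neg at hmin
        exact ⟨A, hA, fun x hx h => hmin x hx h⟩
  obtain ⟨A, ⟨ha, hb, hnr⟩, hminimal⟩ :=
    key ({w | Γ.Adj a w}).ncard {w | Γ.Adj a w} le_rfl hN
  refine ⟨A, ha, hb, hnr, ?_⟩
  intro x hx
  by_contra hnr'
  refine hminimal x hx ⟨fun h => ha h.1, fun h => hb h.1, fun hr => hnr' ?_⟩
  exact hr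

section Backward
variable {V₁ V₂ : Type*} [Fintype V₁] [Fintype V₂]

lemma backward (hn₁ : 2 ≤ Fintype.card V₁) (hn₂ : 1 ≤ Fintype.card V₂)
    (T : Set (V₁ ⊕ V₁ × V₂))
    (hT : CutPointProperty (coronaGraph (⊤ : SimpleGraph V₁) (⊤ : SimpleGraph V₂)) T) :
    nc (coronaGraph (⊤ : SimpleGraph V₁) (⊤ : SimpleGraph V₂)) Tᶜ = T.ncard + 1 := by
  classical
  set G := coronaGraph (⊤ : SimpleGraph V₁) (⊤ : SimpleGraph V₂) with hG
  have hnoinr : ∀ p : V₁ × V₂, Sum.inr p ∉ T := by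
    intro p hp
    have hlt := hT _ hp
    have hle := nc_le_nc_union G (s := Tᶜ) (x := Sum.inr p) ?_
    · omega
    · rintro (a | q) (b | q') hu hv hadj hadj'
      · have h1 : p.1 = a := hadj
        have h2 : p.1 = b := hadj'
        left; rw [← h1, ← h2]
      · have h1 : p.1 = a := hadj
        obtain ⟨h2, -⟩ := (hadj' : p.1 = q'.1 ∧ (⊤ : SimpleGraph V₂).Adj p.2 q'.2)
        right; show a = q'.1; rw [← h1, ← h2]
      · obtain ⟨h1, -⟩ := (hadj : p.1 = q.1 ∧ (⊤ : SimpleGraph V₂).Adj p.2 q.2)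
        have h2 : p.1 = b := hadj'
        right; show q.1 = b; rw [← h1, ← h2]
      · obtain ⟨h1, -⟩ := (hadj : p.1 = q.1 ∧ (⊤ : SimpleGraph V₂).Adj p.2 q.2)
        obtain ⟨h2, -⟩ := (hadj' : p.1 = q'.1 ∧ (⊤ : SimpleGraph V₂).Adj p.2 q'.2)
        by_cases h3 : q.2 = q'.2
        · left
          have : q = q' := Prod.ext (by rw [← h1, ← h2]) h3
          rw [this]
        · right
          exact ⟨by rw [← h1, ← h2], h3⟩
  have hexl : ∃ a₀ : V₁, Sum.inl a₀ ∉ T := by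
    by_contra hall
    push_neg at hall
    obtain ⟨a⟩ : Nonempty V₁ := Fintype.card_pos_iff.mp (by omega)
    have hlt := hT _ (hall a)
    have hle := nc_le_nc_union G (s := Tᶜ) (x := Sum.inl a) ?_
    · omega
    · rintro (b | q) (c | q') hu hv hadj hadj'
      · exact absurd (hall b) hu
      · exact absurd (hall b) hu
      · exact absurd (hall c) hv
      · have h1 : a = q.1 := hadj
        have h2 : a = q'.1 := hadj'
        by_cases h3 : q.2 = q'.2
        · left
          have : q = q' := Prod.ext (by rw [← h1, ← h2]) h3
          rw [this]
        · right
          exact ⟨by rw [← h1, ← h2], h3⟩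
  set S : Set V₁ := {a | Sum.inl a ∈ T} with hS
  have hTS : T = Sum.inl '' S := by
    ext w
    cases w with
    | inl a => simp [hS]
    | inr p => simp [hnoinr p]
  obtain ⟨a₀, ha₀⟩ := hexl
  obtain ⟨y₀⟩ : Nonempty V₂ := Fintype.card_pos_iff.mp (by omega)
  set f : (V₁ ⊕ V₁ × V₂) → Option V₁ :=
    Sum.elim (fun _ => none) (fun p => if p.1 ∈ S then some p.1 else none) with hf
  have hmemc : ∀ a : V₁, (Sum.inl a ∈ Tᶜ) ↔ a ∉ S := fun a => Iff.rfl
  have hinrc : ∀ p : V₁ × V₂, Sum.inr p ∈ Tᶜ := fun p => hnoinr p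
  have h1 : ∀ u v : ↥(Tᶜ), (G.induce Tᶜ).Adj u v → f u.1 = f v.1 := by
    rintro ⟨(a | p), hu⟩ ⟨(b | q), hv⟩ hadj
    · rfl
    · have h0 : a = q.1 := hadj
      have haS : a ∉ S := (hmemc a).1 hu
      simp only [hf, Sum.elim_inl, Sum.elim_inr]
      rw [if_neg (h0 ▸ haS)]
    · have h0 : p.1 = b := hadj
      have hbS : b ∉ S := (hmemc b).1 hv
      simp only [hf, Sum.elim_inl, Sum.elim_inr]
      rw [if_neg (h0.symm ▸ hbS)]
    · obtain ⟨h0, -⟩ := (hadj : p.1 = q.1 ∧ (⊤ : SimpleGraph V₂).Adj p.2 q.2)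
      simp only [hf, Sum.elim_inr]
      rw [h0]
  have hne_reach : ∀ (w : ↥(Tᶜ)), f w.1 = none → ∃ (a : V₁) (ha : a ∉ S),
      (G.induce Tᶜ).Reachable w ⟨Sum.inl a, (hmemc a).2 ha⟩ := by
    rintro ⟨(a | p), hw⟩ hfw
    · exact ⟨a, (hmemc a).1 hw, Reachable.refl _⟩
    · have hpS : p.1 ∉ S := by
        intro h
        simp only [hf, Sum.elim_inr, if_pos h] at hfw
        exact Option.some_ne_none _ hfw
      refine ⟨p.1, hpS, ?_⟩
      exact SimpleGraph.Adj.reachable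
        (show (G.induce Tᶜ).Adj ⟨Sum.inr p, hw⟩ ⟨Sum.inl p.1, (hmemc p.1).2 hpS⟩ from rfl)
  have h2 : ∀ u v : ↥(Tᶜ), f u.1 = f v.1 → (G.induce Tᶜ).Reachable u v := by
    intro u v hfuv
    cases hfv : f v.1 with
    | none =>
      have hfu : f u.1 = none := by rw [hfuv, hfv]
      obtain ⟨a, ha, hra⟩ := hne_reach u hfu
      obtain ⟨b, hb, hrb⟩ := hne_reach v hfv
      refine hra.trans (Reachable.trans ?_ hrb.symm)
      by_cases hab : a = b
      · subst hab; exact Reachable.refl _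
      · exact SimpleGraph.Adj.reachable
          (show (G.induce Tᶜ).Adj ⟨Sum.inl a, _⟩ ⟨Sum.inl b, _⟩ from hab)
    | some c =>
      have hfu : f u.1 = some c := by rw [hfuv, hfv]
      obtain ⟨(a | p), hu⟩ := u
      · simp only [hf, Sum.elim_inl] at hfu
        exact absurd hfu (by simp)
      obtain ⟨(b | q), hv⟩ := v
      · simp only [hf, Sum.elim_inl] at hfv
        exact absurd hfv (by simp)
      have hpS : p.1 ∈ S ∧ p.1 = c := by
        by_cases h : p.1 ∈ S
        · simp only [hf, Sum.elim_inr, if_pos h, Option.some.injEq] at hfu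
          exact ⟨h, hfu⟩
        · simp only [hf, Sum.elim_inr, if_neg h] at hfu
          exact absurd hfu (by simp)
      have hqS : q.1 ∈ S ∧ q.1 = c := by
        by_cases h : q.1 ∈ S
        · simp only [hf, Sum.elim_inr, if_pos h, Option.some.injEq] at hfv
          exact ⟨h, hfv⟩
        · simp only [hf, Sum.elim_inr, if_neg h] at hfv
          exact absurd hfv (by simp)
      have hpq1 : p.1 = q.1 := by rw [hpS.2, hqS.2]
      by_cases h3 : p.2 = q.2
      · have : p = q := Prod.ext hpq1 h3
        subst this
        exact Reachable.refl _
      · exact SimpleGraph.Adj.reachable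
          (show (G.induce Tᶜ).Adj ⟨Sum.inr p, hu⟩ ⟨Sum.inr q, hv⟩ from ⟨hpq1, h3⟩)
  have hcount := nc_eq_card_image G Tᶜ f h1 h2
  have himg : f '' Tᶜ = insert none (some '' S) := by
    ext x
    constructor
    · rintro ⟨(a | p), hw, rfl⟩
      · exact Or.inl rfl
      · by_cases h : p.1 ∈ S
        · right
          exact ⟨p.1, h, by simp [hf, if_pos h]⟩
        · left
          simp [hf, if_neg h]
    · rintro (rfl | ⟨a, ha, rfl⟩)
      · exact ⟨Sum.inl a₀, ha₀, rfl⟩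
      · exact ⟨Sum.inr (a, y₀), hinrc _, by simp [hf, if_pos ha]⟩
  rw [hcount, Nat.card_coe_set_eq, himg,
      Set.ncard_insert_of_notMem (by simp) (Set.toFinite _),
      Set.ncard_image_of_injective _ (Option.some_injective _), hTS,
      Set.ncard_image_of_injective _ Sum.inl_injective]

end Backward

section ForwardH
variable {V₁ V₂ : Type*} [Fintype V₁] [Fintype V₂]

lemma forwardH (hn₂ : 1 ≤ Fintype.card V₂)
    (H : SimpleGraph V₁) (H' : SimpleGraph V₂)
    (hyp : ∀ T : Set (V₁ ⊕ V₁ × V₂), CutPointProperty (coronaGraph H H') T →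
        nc (coronaGraph H H') Tᶜ = T.ncard + 1) :
    H = ⊤ := by
  classical
  by_contra hne
  obtain ⟨a₁, a₂, hne12, hnadj⟩ : ∃ a b : V₁, a ≠ b ∧ ¬ H.Adj a b := by
    by_contra hc
    push_neg at hc
    apply hne
    ext a b
    simp only [top_adj]
    exact ⟨SimpleGraph.Adj.ne, hc a b⟩
  obtain ⟨A, haA, hbA, hnr, hmin⟩ := exists_min_sep H hne12 hnadj
  set G := coronaGraph H H' with hG
  set T : Set (V₁ ⊕ V₁ × V₂) := Sum.inl '' A with hT
  have hmemTc : ∀ a : V₁, Sum.inl a ∈ Tᶜ ↔ a ∉ A := by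
    intro a; simp [hT]
  have hinrTc : ∀ p : V₁ × V₂, Sum.inr p ∈ Tᶜ := by
    intro p; simp [hT]
  set π : (V₁ ⊕ V₁ × V₂) → V₁ := Sum.elim id Prod.fst with hπ
  have claim : ∀ (u v : ↥(Tᶜ)) (p : (G.induce Tᶜ).Walk u v) (h1 : π u.1 ∉ A),
      ∃ (h2 : π v.1 ∉ A), (H.induce Aᶜ).Reachable ⟨π u.1, h1⟩ ⟨π v.1, h2⟩ := by
    intro u v p
    induction p with
    | nil => intro h1; exact ⟨h1, Reachable.refl _⟩
    | @cons a b c hadj q ih =>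
      intro h1
      have hstep : ∃ (hb : π b.1 ∉ A),
          (H.induce Aᶜ).Reachable ⟨π a.1, h1⟩ ⟨π b.1, hb⟩ := by
        obtain ⟨(x | p'), hxa⟩ := a
        · obtain ⟨(y | q'), hyb⟩ := b
          · have hadj' : H.Adj x y := hadj
            have hy : y ∉ A := (hmemTc y).1 hyb
            exact ⟨hy, SimpleGraph.Adj.reachable
              (show (H.induce Aᶜ).Adj ⟨x, h1⟩ ⟨y, hy⟩ from hadj')⟩
          · have hadj' : x = q'.1 := hadj
            have h2 : π (Sum.inr q') ∉ A := by
              show q'.1 ∉ A; rw [← hadj']; exact h1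
            refine ⟨h2, ?_⟩
            have : (⟨π (Sum.inl x), h1⟩ : ↥(Aᶜ)) = ⟨π (Sum.inr q'), h2⟩ :=
              Subtype.ext hadj'
            rw [this]
        · obtain ⟨(y | q'), hyb⟩ := b
          · have hadj' : p'.1 = y := hadj
            have h2 : π (Sum.inl y) ∉ A := by
              show y ∉ A; rw [← hadj']; exact h1
            refine ⟨h2, ?_⟩
            have : (⟨π (Sum.inr p'), h1⟩ : ↥(Aᶜ)) = ⟨π (Sum.inl y), h2⟩ :=
              Subtype.ext hadj'
            rw [this]
          · obtain ⟨hadj', -⟩ := (hadj : p'.1 = q'.1 ∧ H'.Adj p'.2 q'.2)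
            have h2 : π (Sum.inr q') ∉ A := by
              show q'.1 ∉ A; rw [← hadj']; exact h1
            refine ⟨h2, ?_⟩
            have : (⟨π (Sum.inr p'), h1⟩ : ↥(Aᶜ)) = ⟨π (Sum.inr q'), h2⟩ :=
              Subtype.ext hadj'
            rw [this]
      obtain ⟨hb, hr⟩ := hstep
      obtain ⟨h2, hr2⟩ := ih hb
      exact ⟨h2, hr.trans hr2⟩
  have hnreach12 : ¬ (G.induce Tᶜ).Reachable
      ⟨Sum.inl a₁, (hmemTc a₁).2 haA⟩ ⟨Sum.inl a₂, (hmemTc a₂).2 hbA⟩ := by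
    intro hr
    obtain ⟨p⟩ := hr
    obtain ⟨h2, hreach'⟩ := claim _ _ p haA
    exact hnr hreach'
  have hCPP : CutPointProperty G T := by
    rintro i hi
    obtain ⟨x, hxA, rfl⟩ : ∃ x, x ∈ A ∧ i = Sum.inl x := by
      rw [hT] at hi
      obtain ⟨x, hx, rfl⟩ := hi
      exact ⟨x, hx, rfl⟩
    refine nc_union_lt G (s := Tᶜ) (x := Sum.inl x)
      ((hmemTc a₁).2 haA) ((hmemTc a₂).2 hbA) ?_ hnreach12
    · have hr := hmin x hxA
      let φ : H.induce ((A \ {x})ᶜ) →g G.induce (Tᶜ ∪ {Sum.inl x}) := {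
        toFun := fun a => ⟨Sum.inl a.1, by
          by_cases h : a.1 ∈ A
          · right
            have hax : a.1 = x := by
              by_contra hax
              exact a.2 ⟨h, hax⟩
            rw [hax]; rfl
          · left; exact (hmemTc a.1).2 h⟩,
        map_rel' := fun h => h }
      exact hr.map φ
  have hval := hyp T hCPP
  obtain ⟨y₀⟩ : Nonempty V₂ := Fintype.card_pos_iff.mp (by omega)
  set P : Set (V₁ ⊕ V₁ × V₂) :=
    insert (Sum.inl a₁) (insert (Sum.inl a₂)
      ((fun x => Sum.inr (x, y₀)) '' A)) with hP
  have hPsub : P ⊆ Tᶜ := by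
    rintro w (rfl | rfl | ⟨x, hx, rfl⟩)
    · exact (hmemTc a₁).2 haA
    · exact (hmemTc a₂).2 hbA
    · exact hinrTc _
  have copyclaim : ∀ (u v : ↥(Tᶜ)) (p : (G.induce Tᶜ).Walk u v)
      (x : V₁), x ∈ A → ∀ (y : V₂), u.1 = Sum.inr (x, y) →
      ∃ y', v.1 = Sum.inr (x, y') := by
    intro u v p
    induction p with
    | nil => intro x hx y hu; exact ⟨y, hu⟩
    | @cons a b c hadj q ih =>
      intro x hx y hu
      have hadj' : G.Adj (Sum.inr (x, y)) b.1 := by rw [← hu]; exact hadj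
      obtain ⟨(z | q'), hb⟩ := b
      · exfalso
        have : x = z := hadj'
        exact ((hmemTc z).1 hb) (this ▸ hx)
      · obtain ⟨h1, -⟩ := (hadj' : x = q'.1 ∧ H'.Adj y q'.2)
        refine ih x hx q'.2 ?_
        show Sum.inr q' = Sum.inr (x, q'.2)
        have h1' : x = q'.1 := h1
        rw [h1']
  have hpair : ∀ (u v : V₁ ⊕ V₁ × V₂) (hu : u ∈ P) (hv : v ∈ P),
      (G.induce Tᶜ).Reachable ⟨u, hPsub hu⟩ ⟨v, hPsub hv⟩ → u = v := by
    have keyr : ∀ (x : V₁), x ∈ A → ∀ (y : V₂) (v : ↥(Tᶜ)),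
        (G.induce Tᶜ).Reachable ⟨Sum.inr (x, y), hinrTc _⟩ v →
        ∃ y', v.1 = Sum.inr (x, y') := by
      intro x hx y v hr
      obtain ⟨p⟩ := hr
      exact copyclaim _ _ p x hx y rfl
    rintro u v (rfl | rfl | ⟨x, hx, rfl⟩) hv hr
    · rcases hv with rfl | rfl | ⟨x', hx', rfl⟩
      · rfl
      · exact absurd hr hnreach12
      · obtain ⟨y', hy'⟩ := keyr x' hx' y₀ _ hr.symm
        exact absurd hy' (by simp)
    · rcases hv with rfl | rfl | ⟨x', hx', rfl⟩
      · exact absurd hr.symm hnreach12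
      · rfl
      · obtain ⟨y', hy'⟩ := keyr x' hx' y₀ _ hr.symm
        exact absurd hy' (by simp)
    · rcases hv with rfl | rfl | ⟨x', hx', rfl⟩
      · obtain ⟨y', hy'⟩ := keyr x hx y₀ _ hr
        exact absurd hy' (by simp)
      · obtain ⟨y', hy'⟩ := keyr x hx y₀ _ hr
        exact absurd hy' (by simp)
      · obtain ⟨y', hy'⟩ := keyr x hx y₀ _ hr
        have : x' = x := by
          have := (Sum.inr_injective hy' : (x', y₀) = (x, y'))
          exact congrArg Prod.fst this
        rw [this]
  have hlow := le_nc G Tᶜ P hPsub hpair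
  have hinj : Function.Injective (fun x : V₁ => (Sum.inr (x, y₀) : V₁ ⊕ V₁ × V₂)) := by
    intro a b h
    simpa using h
  have hPcard : P.ncard = A.ncard + 2 := by
    rw [hP, Set.ncard_insert_of_notMem (by simp [hne12]) (Set.toFinite _),
        Set.ncard_insert_of_notMem (by simp) (Set.toFinite _),
        Set.ncard_image_of_injective _ hinj]
  have hTcard : T.ncard = A.ncard := Set.ncard_image_of_injective _ Sum.inl_injective
  rw [hTcard] at hval
  omega

end ForwardH

section ForwardH'
variable {V₁ V₂ : Type*} [Fintype V₁] [Fintype V₂]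

lemma forwardH' (hn₁ : 2 ≤ Fintype.card V₁)
    (H : SimpleGraph V₁) (H' : SimpleGraph V₂)
    (hyp : ∀ T : Set (V₁ ⊕ V₁ × V₂), CutPointProperty (coronaGraph H H') T →
        nc (coronaGraph H H') Tᶜ = T.ncard + 1) :
    H' = ⊤ := by
  classical
  by_contra hne
  obtain ⟨b₁, b₂, hne12, hnadj⟩ : ∃ a b : V₂, a ≠ b ∧ ¬ H'.Adj a b := by
    by_contra hc
    push_neg at hc
    apply hne
    ext a b
    simp only [top_adj]
    exact ⟨SimpleGraph.Adj.ne, hc a b⟩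
  obtain ⟨A, haA, hbA, hnr, hmin⟩ := exists_min_sep H' hne12 hnadj
  set G := coronaGraph H H' with hG
  set T : Set (V₁ ⊕ V₁ × V₂) :=
    Sum.inl '' univ ∪ Sum.inr '' {p : V₁ × V₂ | p.2 ∈ A} with hT
  have hinlTc : ∀ a : V₁, Sum.inl a ∉ Tᶜ := by
    intro a h
    exact h (Or.inl ⟨a, mem_univ a, rfl⟩)
  have hinrTc : ∀ p : V₁ × V₂, Sum.inr p ∈ Tᶜ ↔ p.2 ∉ A := by
    intro p
    simp [hT]
  -- walks in Tᶜ stay in one copy and project to walks in H' minus A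
  have claim : ∀ (u v : ↥(Tᶜ)) (p : (G.induce Tᶜ).Walk u v)
      (a : V₁) (y : V₂) (hy : y ∉ A), u.1 = Sum.inr (a, y) →
      ∃ (y' : V₂) (hy' : y' ∉ A), v.1 = Sum.inr (a, y') ∧
        (H'.induce Aᶜ).Reachable ⟨y, hy⟩ ⟨y', hy'⟩ := by
    intro u v p
    induction p with
    | nil => intro a y hy hu; exact ⟨y, hy, hu, Reachable.refl _⟩
    | @cons w b c hadj q ih =>
      intro a y hy hu
      have hadj' : G.Adj (Sum.inr (a, y)) b.1 := by rw [← hu]; exact hadj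
      obtain ⟨(z | q'), hb⟩ := b
      · exact absurd hb (hinlTc z)
      · obtain ⟨h1, h2⟩ := (hadj' : (a, y).1 = q'.1 ∧ H'.Adj y q'.2)
        have hq2 : q'.2 ∉ A := (hinrTc q').1 hb
        obtain ⟨y', hy', hveq, hr⟩ := ih a q'.2 hq2 (by
          show Sum.inr q' = Sum.inr (a, q'.2)
          have h1' : a = q'.1 := h1
          rw [h1'])
        refine ⟨y', hy', hveq, Reachable.trans ?_ hr⟩
        exact SimpleGraph.Adj.reachable
          (show (H'.induce Aᶜ).Adj ⟨y, hy⟩ ⟨q'.2, hq2⟩ from h2)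
  have hnreachx : ∀ x : V₁, ¬ (G.induce Tᶜ).Reachable
      ⟨Sum.inr (x, b₁), (hinrTc _).2 haA⟩ ⟨Sum.inr (x, b₂), (hinrTc _).2 hbA⟩ := by
    intro x hr
    obtain ⟨p⟩ := hr
    obtain ⟨y', hy', hveq, hr'⟩ := claim _ _ p x b₁ haA rfl
    have : y' = b₂ := by
      have h5 := Sum.inr_injective hveq.symm
      exact congrArg Prod.snd h5
    subst this
    exact hnr hr'
  have hCPP : CutPointProperty G T := by
    rintro i hi
    rcases hi with ⟨a, -, rfl⟩ | ⟨p, hpA, rfl⟩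
    · refine nc_union_lt G (s := Tᶜ) (x := Sum.inl a)
        ((hinrTc _).2 haA) ((hinrTc _).2 hbA) ?_ (hnreachx a)
      have had1 : (G.induce (Tᶜ ∪ {Sum.inl a})).Adj
          ⟨Sum.inr (a, b₁), Or.inl ((hinrTc _).2 haA)⟩ ⟨Sum.inl a, Or.inr rfl⟩ := rfl
      have had2 : (G.induce (Tᶜ ∪ {Sum.inl a})).Adj
          ⟨Sum.inl a, Or.inr rfl⟩ ⟨Sum.inr (a, b₂), Or.inl ((hinrTc _).2 hbA)⟩ := rfl
      exact had1.reachable.trans had2.reachable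
    · have hpA' : p.2 ∈ A := hpA
      refine nc_union_lt G (s := Tᶜ) (x := Sum.inr p)
        ((hinrTc _).2 haA) ((hinrTc _).2 hbA) ?_ (hnreachx p.1)
      have hr := hmin p.2 hpA'
      let φ : H'.induce ((A \ {p.2})ᶜ) →g G.induce (Tᶜ ∪ {Sum.inr p}) := {
        toFun := fun y => ⟨Sum.inr (p.1, y.1), by
          by_cases h : y.1 ∈ A
          · right
            have hyp2 : y.1 = p.2 := by
              by_contra hc
              exact y.2 ⟨h, hc⟩
            show Sum.inr (p.1, y.1) = Sum.inr p
            rw [hyp2]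
          · left; exact (hinrTc _).2 h⟩,
        map_rel' := fun h => ⟨rfl, h⟩ }
      exact hr.map φ
  have hval := hyp T hCPP
  -- counting components of Tᶜ
  set f : (V₁ ⊕ V₁ × V₂) → Option (V₁ × (H'.induce Aᶜ).ConnectedComponent) :=
    Sum.elim (fun _ => none)
      (fun p => if h : p.2 ∈ Aᶜ then
        some (p.1, (H'.induce Aᶜ).connectedComponentMk ⟨p.2, h⟩) else none) with hf
  have h1 : ∀ u v : ↥(Tᶜ), (G.induce Tᶜ).Adj u v → f u.1 = f v.1 := by
    rintro ⟨(a | p), hu⟩ ⟨(b | q), hv⟩ hadj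
    · exact absurd hu (hinlTc a)
    · exact absurd hu (hinlTc a)
    · exact absurd hv (hinlTc b)
    · obtain ⟨h1', h2'⟩ := (hadj : p.1 = q.1 ∧ H'.Adj p.2 q.2)
      have hp2 : p.2 ∈ Aᶜ := (hinrTc p).1 hu
      have hq2 : q.2 ∈ Aᶜ := (hinrTc q).1 hv
      simp only [hf, Sum.elim_inr, dif_pos hp2, dif_pos hq2, Option.some.injEq]
      refine Prod.ext h1' ?_
      exact ConnectedComponent.sound (SimpleGraph.Adj.reachable
        (show (H'.induce Aᶜ).Adj ⟨p.2, hp2⟩ ⟨q.2, hq2⟩ from h2'))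
  have h2 : ∀ u v : ↥(Tᶜ), f u.1 = f v.1 → (G.induce Tᶜ).Reachable u v := by
    rintro ⟨(a | ⟨p1, p2⟩), hu⟩ ⟨(b | ⟨q1, q2⟩), hv⟩ hfuv
    · exact absurd hu (hinlTc a)
    · exact absurd hu (hinlTc a)
    · exact absurd hv (hinlTc b)
    · have hp2 : p2 ∈ Aᶜ := (hinrTc (p1, p2)).1 hu
      have hq2 : q2 ∈ Aᶜ := (hinrTc (q1, q2)).1 hv
      simp only [hf, Sum.elim_inr, dif_pos hp2, dif_pos hq2, Option.some.injEq,
        Prod.mk.injEq] at hfuv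
      obtain ⟨heq1, heq2⟩ := hfuv
      subst heq1
      have hreach : (H'.induce Aᶜ).Reachable ⟨p2, hp2⟩ ⟨q2, hq2⟩ :=
        ConnectedComponent.exact heq2
      let ψ : H'.induce Aᶜ →g G.induce Tᶜ := {
        toFun := fun y => ⟨Sum.inr (p1, y.1), (hinrTc _).2 y.2⟩,
        map_rel' := fun h => ⟨rfl, h⟩ }
      exact hreach.map ψ
  have hcount := nc_eq_card_image G Tᶜ f h1 h2
  have himg : f '' Tᶜ = some '' univ := by
    ext x
    constructor
    · rintro ⟨(a | p), hw, rfl⟩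
      · exact absurd hw (hinlTc a)
      · have hp2 : p.2 ∈ Aᶜ := (hinrTc p).1 hw
        simp only [hf, Sum.elim_inr, dif_pos hp2]
        exact ⟨_, mem_univ _, rfl⟩
    · rintro ⟨⟨a, c⟩, -, rfl⟩
      obtain ⟨y, hy⟩ := c.exists_rep
      refine ⟨Sum.inr (a, y.1), (hinrTc _).2 y.2, ?_⟩
      simp only [hf, Sum.elim_inr, dif_pos y.2]
      rw [← hy]
      rfl
  set k := nc H' Aᶜ with hk
  have hkval : nc G Tᶜ = Fintype.card V₁ * k := by
    rw [hcount, Nat.card_coe_set_eq, himg,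
        Set.ncard_image_of_injective _ (Option.some_injective _),
        Set.ncard_univ, Nat.card_prod, Nat.card_eq_fintype_card]
    rfl
  have hk2 : 2 ≤ k := by
    have hnt : Nontrivial (H'.induce Aᶜ).ConnectedComponent := by
      refine ⟨(H'.induce Aᶜ).connectedComponentMk ⟨b₁, haA⟩,
        (H'.induce Aᶜ).connectedComponentMk ⟨b₂, hbA⟩, fun h => ?_⟩
      exact hnr (ConnectedComponent.exact h)
    exact Finite.one_lt_card_iff_nontrivial.mpr hnt
  -- cardinality of T
  have hginj : Function.Injective
      (fun q : V₁ × ↥A => (Sum.inr (q.1, q.2.1) : V₁ ⊕ V₁ × V₂)) := by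
    rintro ⟨x, y⟩ ⟨x', y'⟩ h
    simp only [Sum.inr.injEq, Prod.mk.injEq] at h
    exact Prod.ext h.1 (Subtype.ext h.2)
  have hTeq : T = Sum.inl '' univ ∪
      (fun q : V₁ × ↥A => (Sum.inr (q.1, q.2.1) : V₁ ⊕ V₁ × V₂)) '' univ := by
    rw [hT]
    congr 1
    ext w
    constructor
    · rintro ⟨p, hp, rfl⟩
      exact ⟨(p.1, ⟨p.2, hp⟩), mem_univ _, rfl⟩
    · rintro ⟨⟨x, y⟩, -, rfl⟩
      exact ⟨(x, y.1), y.2, rfl⟩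
  have hTcard : T.ncard = Fintype.card V₁ + Fintype.card V₁ * A.ncard := by
    rw [hTeq, Set.ncard_union_eq ?_ (Set.toFinite _) (Set.toFinite _),
        Set.ncard_image_of_injective _ Sum.inl_injective,
        Set.ncard_image_of_injective _ hginj,
        Set.ncard_univ, Set.ncard_univ, Nat.card_prod, Nat.card_coe_set_eq,
        Nat.card_eq_fintype_card]
    · rw [Set.disjoint_left]
      rintro w ⟨a, -, rfl⟩ ⟨⟨x, y⟩, -, h⟩
      exact absurd h (by simp)
  -- contradiction by divisibility
  rw [hkval, hTcard] at hval
  have hd1 : Fintype.card V₁ ∣ Fintype.card V₁ * k := dvd_mul_right _ _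
  have hd2 : Fintype.card V₁ ∣ Fintype.card V₁ + Fintype.card V₁ * A.ncard :=
    dvd_add dvd_rfl (dvd_mul_right _ _)
  have hd := Nat.dvd_sub hd1 hd2
  rw [hval, Nat.add_sub_cancel_left] at hd
  have := Nat.le_of_dvd one_pos hd
  omega

end ForwardH'
end S11


/-- the corona of two connected graphs (`n₁ ≥ 2`, `n₂ ≥ 1`) is unmixed
(in the Rauf–Rinaldo sense) iff both graphs are complete. -/
theorem stmt11 {V₁ V₂ : Type*} [Fintype V₁] [Fintype V₂]
    (hn₁ : 2 ≤ Fintype.card V₁) (hn₂ : 1 ≤ Fintype.card V₂)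
    (H : SimpleGraph V₁) (H' : SimpleGraph V₂)
    (hH : H.Connected) (hH' : H'.Connected) :
    (∀ T : Set (V₁ ⊕ V₁ × V₂), CutPointProperty (coronaGraph H H') T →
        nc (coronaGraph H H') Tᶜ = T.ncard + 1) ↔
      (H = ⊤ ∧ H' = ⊤) := by
  constructor
  · intro hyp
    exact ⟨S11.forwardH hn₂ H H' hyp, S11.forwardH' hn₁ H H' hyp⟩
  · rintro ⟨rfl, rfl⟩
    intro T hT
    exact S11.backward hn₁ hn₂ T hT
end
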